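/- arXiv:2006.03754 — 5 statements merged into one kernel-verified Lean document; each statement's English description precedes it below -/
import Mathlib

section
/- There is no finite constant C > 0 such that ‖T(f₁,f₂)‖_∞ ≤ C ‖f₁‖_∞ ‖f₂‖_2 holds for all nonnegative measurable functions f₁, f₂ on ℝ; that is, in dimension n = 2 the bilinear spherical average T fails to be of strong type at the point E = (0, 1/2; 0). -/
open MeasureTheory ENNReal

/-- The `L^p` "norm" (with respect to Lebesgue measure on `ℝ`) of an
`ℝ≥0∞`-valued function, with the convention for `p = ∞`. -/
noncomputable def lpNorm (p : ℝ≥0∞) (g : ℝ → ℝ≥0∞) : ℝ≥0∞ :=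
  if p = ∞ then essSup g (volume : Measure ℝ)
  else (∫⁻ x, g x ^ p.toReal) ^ (1 / p.toReal)

/-- The bilinear spherical average in dimension `n = 2`:
`T(f₁,f₂)(x) = (1/(2π)) ∫₀^{2π} f₁(x − cos t) f₂(x − sin t) dt`. -/
noncomputable def T2 (f₁ f₂ : ℝ → ℝ) (x : ℝ) : ℝ≥0∞ :=
  (ENNReal.ofReal (2 * Real.pi))⁻¹ *
    ∫⁻ t in Set.Ioc 0 (2 * Real.pi),
      ENNReal.ofReal (f₁ (x - Real.cos t)) * ENNReal.ofReal (f₂ (x - Real.sin t))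

lemma lint_Ioo_eq {a b : ℝ} (hab : a ≤ b) {g : ℝ → ℝ}
    (hg : IntervalIntegrable g volume a b) (hg0 : ∀ x ∈ Set.Ioo a b, 0 ≤ g x) :
    ∫⁻ x in Set.Ioo a b, ENNReal.ofReal (g x) = ENNReal.ofReal (∫ x in a..b, g x) := by
  rw [intervalIntegral.integral_of_le hab, MeasureTheory.integral_Ioc_eq_integral_Ioo,
    ← MeasureTheory.ofReal_integral_eq_lintegral_ofReal]
  · exact (((intervalIntegrable_iff_integrableOn_Ioc_of_le hab).mp hg).mono_set
      Set.Ioo_subset_Ioc_self)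
  · filter_upwards [ae_restrict_mem measurableSet_Ioo] with x hx using hg0 x hx


lemma pointwise_bound {ε δ x t : ℝ} (hε : 0 < ε) (hε6 : ε < 1/6) (hδdef : δ = ε^2)
    (hx : x ∈ Set.Ioo (1:ℝ) (1+δ))
    (ht : t ∈ Set.Ioo (Real.pi/2 - 1/2) (Real.pi/2 - 3*ε)) :
    (Real.pi/2 - t)⁻¹ ≤
      (Set.Ioo δ (1/2)).indicator (fun y => (Real.sqrt y)⁻¹) (x - Real.sin t) := by
  have hπ3 : (3:ℝ) < Real.pi := Real.pi_gt_three
  have hπ4 : Real.pi < 3.15 := Real.pi_lt_d2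
  have hδ : 0 < δ := by rw [hδdef]; positivity
  obtain ⟨h, hh⟩ : ∃ h : ℝ, h = Real.pi/2 - t := ⟨_, rfl⟩
  have hh1 : 3*ε < h := by rw [hh]; have := ht.2; linarith
  have hh2 : h < 1/2 := by rw [hh]; have := ht.1; linarith
  have hh0 : 0 < h := by linarith
  have hteq : t = Real.pi/2 - h := by rw [hh]; ring
  have hsin : Real.sin t = Real.cos h := by rw [hteq, Real.sin_pi_div_two_sub]
  obtain ⟨s, hs⟩ : ∃ s : ℝ, s = x - Real.cos h := ⟨_, rfl⟩
  have hcub : Real.cos h ≤ 1 - 2/Real.pi^2 * h^2 :=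
    Real.cos_le_one_sub_mul_cos_sq (by rw [abs_of_pos hh0]; linarith)
  have h15 : (1:ℝ)/5 ≤ 2/Real.pi^2 := by
    rw [div_le_div_iff₀ (by norm_num) (by positivity)]
    nlinarith
  have hlow : h^2/5 ≤ 1 - Real.cos h := by nlinarith [sq_nonneg h]
  have hup : 1 - Real.cos h ≤ h^2/2 := by
    have := Real.one_sub_sq_div_two_le_cos (x := h); linarith
  have h9 : 9*ε^2 < h^2 := by
    have h3 : (3*ε)^2 < h^2 := by
      apply pow_lt_pow_left₀ hh1 (by positivity)
      norm_num
    nlinarith [h3]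
  have hs_lb : δ < s := by
    rw [hs, hδdef]
    have hx1 : 1 < x := hx.1
    linarith
  have hs_ub2 : s < h^2 := by
    rw [hs]
    have hx2 : x < 1 + δ := hx.2
    rw [hδdef] at hx2
    linarith
  have hs_ub : s < 1/2 := by nlinarith [hh2, hh0, hs_ub2]
  have hsmem : s ∈ Set.Ioo δ (1/2) := ⟨hs_lb, hs_ub⟩
  have hf2v : (Set.Ioo δ (1/2)).indicator (fun y => (Real.sqrt y)⁻¹) (x - Real.sin t)
      = (Real.sqrt s)⁻¹ := by
    rw [hsin, ← hs]
    exact Set.indicator_of_mem hsmem _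
  rw [hf2v, ← hh]
  have hs0 : 0 < s := lt_trans hδ hs_lb
  have hsq : Real.sqrt s ≤ h := by
    calc Real.sqrt s ≤ Real.sqrt (h^2) := Real.sqrt_le_sqrt hs_ub2.le
      _ = h := Real.sqrt_sq hh0.le
  exact inv_anti₀ (Real.sqrt_pos.mpr hs0) hsq


lemma numeric_contra {C S r ε δ L M : ℝ} (hC : 0 < C)
    (hS : S = 8 * Real.pi * (C + 1)) (hr : r = S ^ 2)
    (hεdef : ε = Real.exp (-r)) (hδdef : δ = ε ^ 2)
    (hLdef : L = Real.log (1/2 / δ)) (hMdef : M = Real.log (1/2 / (3*ε)))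
    (hreal : M ≤ C * Real.sqrt L * (2*Real.pi)) : False := by
  have hπ3 : (3:ℝ) < Real.pi := Real.pi_gt_three
  have hS24 : 24 ≤ S := by rw [hS]; nlinarith
  have hε : 0 < ε := by rw [hεdef]; exact Real.exp_pos _
  have hδ : 0 < δ := by rw [hδdef]; positivity
  have hM : M = r - Real.log 2 - Real.log 3 := by
    rw [hMdef, Real.log_div (by norm_num) (by positivity),
      Real.log_mul (by norm_num) hε.ne', hεdef, Real.log_exp,
      one_div, Real.log_inv]
    ring
  have hLv : L = 2*r - Real.log 2 := by
    rw [hLdef, Real.log_div (by norm_num) hδ.ne', hδdef, Real.log_pow, hεdef,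
      Real.log_exp, one_div, Real.log_inv]
    push_cast
    ring
  have hlog2 : (0:ℝ) ≤ Real.log 2 := Real.log_nonneg (by norm_num)
  have hsL : Real.sqrt L ≤ 3/2 * S := by
    have h1 : L ≤ (3/2*S)^2 := by rw [hLv, hr]; nlinarith
    calc Real.sqrt L ≤ Real.sqrt ((3/2*S)^2) := Real.sqrt_le_sqrt h1
      _ = 3/2*S := Real.sqrt_sq (by linarith)
  have hlog2' : Real.log 2 ≤ 1 := by
    have := Real.log_le_sub_one_of_pos (show (0:ℝ) < 2 by norm_num); linarith
  have hlog3 : Real.log 3 ≤ 2 := by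
    have := Real.log_le_sub_one_of_pos (show (0:ℝ) < 3 by norm_num); linarith
  have hrhs : C * Real.sqrt L * (2*Real.pi) ≤ 3 * Real.pi * C * S := by
    have h1 : C * Real.sqrt L ≤ C * (3/2*S) :=
      mul_le_mul_of_nonneg_left hsL hC.le
    nlinarith [Real.sqrt_nonneg L]
  rw [hM, hr] at hreal
  nlinarith [hreal, hrhs, hS24, hπ3, hC]

theorem not_strong_type_at_E :
    ¬ ∃ C : ℝ, 0 < C ∧ ∀ f₁ f₂ : ℝ → ℝ, Measurable f₁ → Measurable f₂ →
      (∀ x, 0 ≤ f₁ x) → (∀ x, 0 ≤ f₂ x) →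
      lpNorm ∞ (T2 f₁ f₂) ≤ ENNReal.ofReal C *
        lpNorm ∞ (fun x => ENNReal.ofReal (f₁ x)) *
        lpNorm 2 (fun x => ENNReal.ofReal (f₂ x)) := by
  rintro ⟨C, hC, H⟩
  have hπ3 : (3:ℝ) < Real.pi := Real.pi_gt_three
  have hπ4 : Real.pi < 3.15 := Real.pi_lt_d2
  -- parameters
  obtain ⟨S, hS⟩ : ∃ S : ℝ, S = 8 * Real.pi * (C + 1) := ⟨_, rfl⟩
  have hS24 : 24 ≤ S := by rw [hS]; nlinarith
  obtain ⟨r, hr⟩ : ∃ r : ℝ, r = S ^ 2 := ⟨_, rfl⟩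
  have hr4 : 4 ≤ r := by rw [hr]; nlinarith
  obtain ⟨ε, hεdef⟩ : ∃ e : ℝ, e = Real.exp (-r) := ⟨_, rfl⟩
  have hε : 0 < ε := by rw [hεdef]; exact Real.exp_pos _
  have hε6 : ε < 1 / 6 := by
    have h := Real.exp_one_gt_d9
    have h2 : (6:ℝ) < Real.exp 4 :=
      calc (6:ℝ) < 2.7182818283 ^ 4 := by norm_num
        _ ≤ Real.exp 1 ^ 4 := pow_le_pow_left₀ (by norm_num) h.le 4
        _ = Real.exp ((4:ℕ):ℝ) := Real.exp_one_pow 4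
        _ = Real.exp 4 := by norm_num
    have h1 : ε ≤ Real.exp (-4) := by
      rw [hεdef]; exact Real.exp_le_exp.mpr (by linarith)
    have hmul : Real.exp (-4) * Real.exp 4 = 1 := by
      rw [← Real.exp_add]; norm_num
    nlinarith [Real.exp_pos 4, Real.exp_pos (-4)]
  obtain ⟨δ, hδdef⟩ : ∃ d : ℝ, d = ε ^ 2 := ⟨_, rfl⟩
  have hδ : 0 < δ := by rw [hδdef]; positivity
  have hδhalf : δ < 1 / 2 := by rw [hδdef]; nlinarith
  -- the functions
  obtain ⟨f₁, hf₁⟩ : ∃ f : ℝ → ℝ, f = fun _ => 1 := ⟨_, rfl⟩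
  obtain ⟨f₂, hf₂⟩ : ∃ f : ℝ → ℝ,
      f = (Set.Ioo δ (1/2)).indicator (fun y => (Real.sqrt y)⁻¹) := ⟨_, rfl⟩
  have hf₁m : Measurable f₁ := by rw [hf₁]; exact measurable_const
  have hf₂m : Measurable f₂ := by
    rw [hf₂]
    exact Measurable.indicator (Real.continuous_sqrt.measurable.inv) measurableSet_Ioo
  have hf₁0 : ∀ x, 0 ≤ f₁ x := by rw [hf₁]; exact fun _ => zero_le_one
  have hf₂0 : ∀ x, 0 ≤ f₂ x := by
    rw [hf₂]
    exact fun x => Set.indicator_nonneg (fun y _ => by positivity) x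
  -- quantities
  obtain ⟨L, hLdef⟩ : ∃ l : ℝ, l = Real.log (1/2 / δ) := ⟨_, rfl⟩
  obtain ⟨M, hMdef⟩ : ∃ m : ℝ, m = Real.log (1/2 / (3*ε)) := ⟨_, rfl⟩
  have hL0 : 0 ≤ L := by
    rw [hLdef]
    exact Real.log_nonneg (by rw [le_div_iff₀ hδ]; linarith)
  -- (A) L^∞ norm of f₁
  have hvol : (volume : Measure ℝ) ≠ 0 := by
    intro h
    have h2 : (volume : Measure ℝ) (Set.Ioo 0 1) = 0 := by rw [h]; rfl
    rw [Real.volume_Ioo] at h2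
    simp at h2
  have hA : lpNorm ∞ (fun x => ENNReal.ofReal (f₁ x)) = 1 := by
    rw [_root_.lpNorm, if_pos rfl, hf₁]
    simp only [ENNReal.ofReal_one]
    exact essSup_const _ hvol
  -- (B) L² norm of f₂
  have hB : lpNorm 2 (fun x => ENNReal.ofReal (f₂ x)) = ENNReal.ofReal (Real.sqrt L) := by
    rw [_root_.lpNorm, if_neg (by norm_num)]
    have ht2 : ((2:ℝ≥0∞)).toReal = 2 := by norm_num
    have hpt : ∀ x : ℝ, (ENNReal.ofReal (f₂ x)) ^ (2:ℝ)
        = (Set.Ioo δ (1/2)).indicator (fun y => ENNReal.ofReal y⁻¹) x := by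
      intro x
      by_cases hx : x ∈ Set.Ioo δ (1/2)
      · rw [hf₂, Set.indicator_of_mem hx, Set.indicator_of_mem hx,
          ENNReal.ofReal_rpow_of_nonneg (by positivity) (by norm_num), Real.rpow_two]
        congr 1
        rw [inv_pow, Real.sq_sqrt (le_of_lt (hδ.trans hx.1))]
      · rw [hf₂, Set.indicator_of_notMem hx, Set.indicator_of_notMem hx,
          ENNReal.ofReal_zero, ENNReal.zero_rpow_of_pos (by norm_num)]
    have hint : IntervalIntegrable (fun y : ℝ => y⁻¹) volume δ (1/2) := by
      apply intervalIntegral.intervalIntegrable_inv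
      · intro x hx
        rw [Set.uIcc_of_le hδhalf.le] at hx
        exact ne_of_gt (lt_of_lt_of_le hδ hx.1)
      · exact continuousOn_id
    have hval : ∫ y in δ..(1/2), y⁻¹ = L := by
      rw [integral_inv_of_pos hδ (by norm_num), hLdef]
    have hbody : ∫⁻ x, (ENNReal.ofReal (f₂ x)) ^ ((2:ℝ≥0∞)).toReal = ENNReal.ofReal L := by
      rw [ht2]
      calc ∫⁻ x, (ENNReal.ofReal (f₂ x)) ^ (2:ℝ)
          = ∫⁻ x, (Set.Ioo δ (1/2)).indicator (fun y => ENNReal.ofReal y⁻¹) x := by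
            simp_rw [hpt]
        _ = ∫⁻ x in Set.Ioo δ (1/2), ENNReal.ofReal x⁻¹ :=
            lintegral_indicator measurableSet_Ioo _
        _ = ENNReal.ofReal (∫ y in δ..(1/2), y⁻¹) :=
            lint_Ioo_eq hδhalf.le hint
              (fun x hx => inv_nonneg.mpr (le_of_lt (hδ.trans hx.1)))
        _ = ENNReal.ofReal L := by rw [hval]
    rw [hbody, ht2, ENNReal.ofReal_rpow_of_nonneg hL0 (by norm_num),
      ← Real.sqrt_eq_rpow]
  -- endpoints of the t-interval
  obtain ⟨a, ha⟩ : ∃ a : ℝ, a = Real.pi/2 - 1/2 := ⟨_, rfl⟩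
  obtain ⟨b, hb⟩ : ∃ b : ℝ, b = Real.pi/2 - 3*ε := ⟨_, rfl⟩
  have hab : a < b := by rw [ha, hb]; linarith
  -- (C) pointwise lower bound on the integrand
  have hbound : ∀ x ∈ Set.Ioo (1:ℝ) (1+δ), ∀ t ∈ Set.Ioo a b,
      ENNReal.ofReal ((Real.pi/2 - t)⁻¹) ≤ ENNReal.ofReal (f₂ (x - Real.sin t)) := by
    intro x hx t ht
    rw [ha, hb] at ht
    rw [hf₂]
    exact ENNReal.ofReal_le_ofReal (pointwise_bound hε hε6 hδdef hx ht)
  -- integrability and value of the lower-bound integral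
  have hint2 : IntervalIntegrable (fun t : ℝ => (Real.pi/2 - t)⁻¹) volume a b := by
    apply intervalIntegral.intervalIntegrable_inv
    · intro t htt
      rw [Set.uIcc_of_le hab.le] at htt
      have h1 : t ≤ b := htt.2
      rw [hb] at h1
      have : 0 < Real.pi/2 - t := by linarith
      exact ne_of_gt this
    · exact (continuousOn_const.sub continuousOn_id)
  have hMval : ∫ t in a..b, (Real.pi/2 - t)⁻¹ = M := by
    have hcs := intervalIntegral.integral_comp_sub_left (a := a) (b := b)
      (fun y : ℝ => y⁻¹) (Real.pi/2)
    rw [show Real.pi/2 - b = 3*ε by rw [hb]; ring,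
      show Real.pi/2 - a = 1/2 by rw [ha]; ring] at hcs
    rw [hcs, integral_inv_of_pos (by positivity) (by norm_num), hMdef]
  -- (C') pointwise lower bound for T2
  have hT : ∀ x ∈ Set.Ioo (1:ℝ) (1+δ),
      ENNReal.ofReal M * (ENNReal.ofReal (2*Real.pi))⁻¹ ≤ T2 f₁ f₂ x := by
    intro x hx
    have hmeas : Measurable fun t : ℝ => ENNReal.ofReal (f₂ (x - Real.sin t)) :=
      ENNReal.measurable_ofReal.comp (hf₂m.comp (measurable_const.sub Real.measurable_sin))
    have hsub : Set.Ioo a b ⊆ Set.Ioc 0 (2*Real.pi) := by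
      intro t htt
      constructor
      · have := htt.1; rw [ha] at this; linarith
      · have := htt.2; rw [hb] at this; linarith
    have step1 : ENNReal.ofReal M ≤ ∫⁻ t in Set.Ioc 0 (2*Real.pi),
        ENNReal.ofReal (f₁ (x - Real.cos t)) * ENNReal.ofReal (f₂ (x - Real.sin t)) := by
      have e1 : ∀ t : ℝ, ENNReal.ofReal (f₁ (x - Real.cos t)) *
          ENNReal.ofReal (f₂ (x - Real.sin t)) = ENNReal.ofReal (f₂ (x - Real.sin t)) := by
        intro t; rw [hf₁]; simp
      calc ENNReal.ofReal M
          = ∫⁻ t in Set.Ioo a b, ENNReal.ofReal ((Real.pi/2 - t)⁻¹) := by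
            rw [lint_Ioo_eq hab.le hint2 (fun t htt => by
              have h1 := htt.2; rw [hb] at h1
              have h0 : 0 < Real.pi/2 - t := by linarith
              positivity), hMval]
        _ ≤ ∫⁻ t in Set.Ioo a b, ENNReal.ofReal (f₂ (x - Real.sin t)) :=
            setLIntegral_mono hmeas (hbound x hx)
        _ ≤ ∫⁻ t in Set.Ioc 0 (2*Real.pi), ENNReal.ofReal (f₂ (x - Real.sin t)) :=
            lintegral_mono_set hsub
        _ = _ := by simp_rw [e1]
    rw [T2]
    rw [mul_comm (ENNReal.ofReal M)]
    exact mul_le_mul_right step1 _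
  -- (D) lower bound on the essential supremum
  have hD : ENNReal.ofReal M * (ENNReal.ofReal (2*Real.pi))⁻¹
      ≤ essSup (T2 f₁ f₂) volume := by
    by_contra hlt
    push_neg at hlt
    have hae := ENNReal.ae_le_essSup (μ := (volume : Measure ℝ)) (T2 f₁ f₂)
    rw [MeasureTheory.ae_iff] at hae
    have hsub2 : Set.Ioo (1:ℝ) (1+δ)
        ⊆ {x | ¬ T2 f₁ f₂ x ≤ essSup (T2 f₁ f₂) volume} := by
      intro x hx hle
      exact absurd hle (not_le.mpr (lt_of_lt_of_le hlt (hT x hx)))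
    have h0 := measure_mono_null hsub2 hae
    rw [Real.volume_Ioo, show (1:ℝ) + δ - 1 = δ by ring] at h0
    rw [ENNReal.ofReal_eq_zero] at h0
    linarith
  -- (E) combine
  have hH := H f₁ f₂ hf₁m hf₂m hf₁0 hf₂0
  rw [show ((∞:ℝ≥0∞)) = ∞ from rfl] at hH
  rw [_root_.lpNorm, if_pos rfl, hA, hB, mul_one] at hH
  have hchain : ENNReal.ofReal M * (ENNReal.ofReal (2*Real.pi))⁻¹
      ≤ ENNReal.ofReal (C * Real.sqrt L) := by
    rw [ENNReal.ofReal_mul hC.le]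
    exact le_trans hD hH
  have hfinal : ENNReal.ofReal M ≤ ENNReal.ofReal (C * Real.sqrt L * (2*Real.pi)) := by
    have h2π : (0:ℝ) < 2*Real.pi := by linarith
    have hne0 : ENNReal.ofReal (2*Real.pi) ≠ 0 := (ENNReal.ofReal_pos.mpr h2π).ne'
    have hnetop : ENNReal.ofReal (2*Real.pi) ≠ ∞ := ENNReal.ofReal_ne_top
    have hchain' : ENNReal.ofReal M / ENNReal.ofReal (2*Real.pi)
        ≤ ENNReal.ofReal (C * Real.sqrt L) := by
      rw [div_eq_mul_inv]; exact hchain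
    have hstep := (ENNReal.div_le_iff hne0 hnetop).mp hchain'
    calc ENNReal.ofReal M
        ≤ ENNReal.ofReal (C * Real.sqrt L) * ENNReal.ofReal (2*Real.pi) := hstep
      _ = ENNReal.ofReal (C * Real.sqrt L * (2*Real.pi)) :=
          (ENNReal.ofReal_mul (by positivity)).symm
  have hreal : M ≤ C * Real.sqrt L * (2*Real.pi) :=
    (ENNReal.ofReal_le_ofReal_iff (by positivity)).mp hfinal
  exact numeric_contra hC hS hr hεdef hδdef hLdef hMdef hreal
end

section
/- There exists a finite constant C > 0 such that for all nonnegative measurable functions f₁, f₂ on ℝ and every λ > 0, the Lebesgue measure of {x ∈ ℝ : T(f₁,f₂)(x) > λ} is at most C λ^{−2} ‖f₁‖_∞² ‖f₂‖_1²; that is, in dimension n = 2 the operator T maps L^∞(ℝ) × L¹(ℝ) boundedly into weak-L²(ℝ) (weak type at the point K = (0, 1; 1/2)). -/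
open MeasureTheory ENNReal

open Real Set

/-- 1D change of variables for the Lebesgue integral of `ℝ≥0∞`-valued functions. -/
lemma lintegral_image_deriv {s : Set ℝ} {f f' : ℝ → ℝ} (hs : MeasurableSet s)
    (hf' : ∀ x ∈ s, HasDerivWithinAt f (f' x) s x) (hf : Set.InjOn f s) (g : ℝ → ℝ≥0∞) :
    ∫⁻ x in f '' s, g x = ∫⁻ x in s, ENNReal.ofReal |f' x| * g (f x) := by
  simpa only [ContinuousLinearMap.det_toSpanSingleton] using
    lintegral_image_eq_lintegral_abs_det_fderiv_mul volume hs
      (fun x hx => (hf' x hx).hasFDerivWithinAt) hf g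

/-- Substitution bound: if `|f'| ≥ δ` on `s ∩ E` and `f` is injective on `s`, then the
integral of `g ∘ f` over `s ∩ E` is at most `δ⁻¹` times the full integral of `g`. -/
lemma sub_bound {s E : Set ℝ} {f f' : ℝ → ℝ} (hs : MeasurableSet s) (hE : MeasurableSet E)
    (hf' : ∀ x ∈ s, HasDerivWithinAt f (f' x) s x) (hf : Set.InjOn f s)
    {δ : ℝ} (hδ : 0 < δ) (hlow : ∀ t ∈ s ∩ E, δ ≤ |f' t|)
    (g : ℝ → ℝ≥0∞) :
    ∫⁻ t in s ∩ E, g (f t) ≤ ENNReal.ofReal δ⁻¹ * ∫⁻ y, g y := by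
  calc ∫⁻ t in s ∩ E, g (f t)
      ≤ ∫⁻ t in s ∩ E, ENNReal.ofReal δ⁻¹ * (ENNReal.ofReal |f' t| * g (f t)) := by
        refine setLIntegral_mono' (hs.inter hE) (fun t ht => ?_)
        have h1 : (1 : ℝ≥0∞) ≤ ENNReal.ofReal δ⁻¹ * ENNReal.ofReal |f' t| := by
          rw [← ENNReal.ofReal_mul (by positivity)]
          rw [ENNReal.one_le_ofReal]
          nlinarith [hlow t ht, inv_pos.2 hδ,
            mul_le_mul_of_nonneg_left (hlow t ht) (inv_pos.2 hδ).le,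
            inv_mul_cancel₀ hδ.ne']
        calc g (f t) = 1 * g (f t) := (one_mul _).symm
          _ ≤ (ENNReal.ofReal δ⁻¹ * ENNReal.ofReal |f' t|) * g (f t) :=
              mul_le_mul_left h1 _
          _ = ENNReal.ofReal δ⁻¹ * (ENNReal.ofReal |f' t| * g (f t)) := by ring
    _ = ENNReal.ofReal δ⁻¹ * ∫⁻ t in s ∩ E, ENNReal.ofReal |f' t| * g (f t) :=
        lintegral_const_mul' _ _ ENNReal.ofReal_ne_top
    _ ≤ ENNReal.ofReal δ⁻¹ * ∫⁻ t in s, ENNReal.ofReal |f' t| * g (f t) :=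
        mul_le_mul_right (lintegral_mono_set inter_subset_left) _
    _ = ENNReal.ofReal δ⁻¹ * ∫⁻ y in f '' s, g y := by
        rw [lintegral_image_deriv hs hf' hf]
    _ ≤ ENNReal.ofReal δ⁻¹ * ∫⁻ y, g y :=
        mul_le_mul_right (setLIntegral_le_lintegral _ _) _

lemma injOn_sin_branch2 : Set.InjOn Real.sin (Icc (π/2) (3*π/2)) := by
  intro u hu v hv h
  have hu' : u - π/2 ∈ Icc 0 π := ⟨by linarith [hu.1], by linarith [hu.2]⟩
  have hv' : v - π/2 ∈ Icc 0 π := ⟨by linarith [hv.1], by linarith [hv.2]⟩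
  have := Real.injOn_cos hu' hv' (by rw [Real.cos_sub_pi_div_two, Real.cos_sub_pi_div_two]; exact h)
  linarith

lemma injOn_sin_branch3 : Set.InjOn Real.sin (Icc (3*π/2) (2*π)) := by
  intro u hu v hv h
  have hu' : u - 2*π ∈ Icc (-(π/2)) (π/2) := ⟨by linarith [hu.1], by nlinarith [hu.2, Real.pi_pos]⟩
  have hv' : v - 2*π ∈ Icc (-(π/2)) (π/2) := ⟨by linarith [hv.1], by nlinarith [hv.2, Real.pi_pos]⟩
  have := Real.injOn_sin hu' hv' (by rw [Real.sin_sub_two_pi, Real.sin_sub_two_pi]; exact h)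
  linarith

lemma injOn_cos_branch2 : Set.InjOn Real.cos (Icc π (2*π)) := by
  intro u hu v hv h
  have hu' : 2*π - u ∈ Icc 0 π := ⟨by linarith [hu.2], by linarith [hu.1]⟩
  have hv' : 2*π - v ∈ Icc 0 π := ⟨by linarith [hv.2], by linarith [hv.1]⟩
  have := Real.injOn_cos hu' hv' (by rw [Real.cos_two_pi_sub, Real.cos_two_pi_sub]; exact h)
  linarith

/-- Bound on the "good" part where `|cos| ≥ δ`. -/
lemma sinE_bound {δ : ℝ} (hδ : 0 < δ) (g : ℝ → ℝ≥0∞) :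
    ∫⁻ t in Set.Ioc 0 (2*π) ∩ {t | δ ≤ |Real.cos t|}, g (Real.sin t)
      ≤ 3 * (ENNReal.ofReal δ⁻¹ * ∫⁻ y, g y) := by
  set E : Set ℝ := {t | δ ≤ |Real.cos t|} with hEdef
  have hE : MeasurableSet E := measurableSet_le measurable_const Real.measurable_cos.abs
  set s₁ : Set ℝ := Icc 0 (π/2)
  set s₂ : Set ℝ := Icc (π/2) (3*π/2)
  set s₃ : Set ℝ := Icc (3*π/2) (2*π)
  have hder : ∀ (s : Set ℝ), ∀ x ∈ s, HasDerivWithinAt Real.sin (Real.cos x) s x :=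
    fun s x _ => (Real.hasDerivAt_sin x).hasDerivWithinAt
  have hcov : Set.Ioc 0 (2*π) ∩ E ⊆ (s₁ ∩ E) ∪ ((s₂ ∩ E) ∪ (s₃ ∩ E)) := by
    rintro t ⟨⟨h0, h2⟩, hEt⟩
    have hπ := Real.pi_pos
    rcases le_or_gt t (π/2) with h | h
    · exact Or.inl ⟨⟨h0.le, h⟩, hEt⟩
    rcases le_or_gt t (3*π/2) with h' | h'
    · exact Or.inr (Or.inl ⟨⟨h.le, h'⟩, hEt⟩)
    · exact Or.inr (Or.inr ⟨⟨h'.le, h2⟩, hEt⟩)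
  have hlow : ∀ (s : Set ℝ), ∀ t ∈ s ∩ E, δ ≤ |Real.cos t| := fun s t ht => ht.2
  have b1 := sub_bound measurableSet_Icc hE (hder s₁)
    (Real.injOn_sin.mono (Icc_subset_Icc (by linarith [Real.pi_pos]) le_rfl)) hδ (hlow s₁) g
  have b2 := sub_bound measurableSet_Icc hE (hder s₂) injOn_sin_branch2 hδ (hlow s₂) g
  have b3 := sub_bound measurableSet_Icc hE (hder s₃) injOn_sin_branch3 hδ (hlow s₃) g
  calc ∫⁻ t in Set.Ioc 0 (2*π) ∩ E, g (Real.sin t)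
      ≤ ∫⁻ t in (s₁ ∩ E) ∪ ((s₂ ∩ E) ∪ (s₃ ∩ E)), g (Real.sin t) :=
        lintegral_mono_set hcov
    _ ≤ (∫⁻ t in s₁ ∩ E, g (Real.sin t)) + ((∫⁻ t in s₂ ∩ E, g (Real.sin t))
          + ∫⁻ t in s₃ ∩ E, g (Real.sin t)) :=
        le_trans (lintegral_union_le _ _ _)
          (add_le_add le_rfl (lintegral_union_le _ _ _))
    _ ≤ (ENNReal.ofReal δ⁻¹ * ∫⁻ y, g y) + ((ENNReal.ofReal δ⁻¹ * ∫⁻ y, g y)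
          + (ENNReal.ofReal δ⁻¹ * ∫⁻ y, g y)) := add_le_add b1 (add_le_add b2 b3)
    _ = 3 * (ENNReal.ofReal δ⁻¹ * ∫⁻ y, g y) := by ring

/-- Measure of the "bad" set where `|cos| < δ`. -/
lemma cosF_bound {δ : ℝ} (hδ : 0 < δ) (hδ2 : δ ≤ 1/2) :
    volume (Set.Ioc 0 (2*π) ∩ {t | |Real.cos t| < δ}) ≤ ENNReal.ofReal (8 * δ) := by
  set F : Set ℝ := {t | |Real.cos t| < δ} with hFdef
  have hF : MeasurableSet F := measurableSet_lt Real.measurable_cos.abs measurable_const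
  set g : ℝ → ℝ≥0∞ := (Set.Ioo (-δ) δ).indicator (fun _ => (1 : ℝ≥0∞)) with hgdef
  have hgint : ∫⁻ y, g y = ENNReal.ofReal (2*δ) := by
    rw [hgdef, lintegral_indicator measurableSet_Ioo, setLIntegral_one, Real.volume_Ioo]
    congr 1; ring
  have hder : ∀ (s : Set ℝ), ∀ x ∈ s, HasDerivWithinAt Real.cos (-Real.sin x) s x :=
    fun s x _ => (Real.hasDerivAt_cos x).hasDerivWithinAt
  have hlow : ∀ t ∈ F, (1:ℝ)/2 ≤ |(-Real.sin t)| := by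
    intro t ht
    have h1 : |Real.cos t| < δ := ht
    have h2 := Real.sin_sq_add_cos_sq t
    rw [abs_neg]
    nlinarith [abs_nonneg (Real.sin t), abs_nonneg (Real.cos t), sq_abs (Real.sin t),
      sq_abs (Real.cos t)]
  have key : ∀ (u : Set ℝ), MeasurableSet u → Set.InjOn Real.cos u →
      volume (u ∩ F) ≤ ENNReal.ofReal 2 * ENNReal.ofReal (2*δ) := by
    intro u hu hinj
    have hlow' : ∀ t ∈ u ∩ F, (1:ℝ)/2 ≤ |(-Real.sin t)| := fun t ht => hlow t ht.2
    have hb := sub_bound hu hF (hder u) hinj (by norm_num : (0:ℝ) < 1/2) hlow' g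
    have heq : ∫⁻ t in u ∩ F, g (Real.cos t) = volume (u ∩ F) := by
      rw [← setLIntegral_one]
      refine setLIntegral_congr_fun (hu.inter hF) (fun t ht => ?_)
      have h1 : |Real.cos t| < δ := ht.2
      rw [hgdef, Set.indicator_of_mem]
      exact abs_lt.1 h1
    rw [heq, hgint] at hb
    calc volume (u ∩ F) ≤ ENNReal.ofReal ((1:ℝ)/2)⁻¹ * ENNReal.ofReal (2*δ) := hb
      _ = ENNReal.ofReal 2 * ENNReal.ofReal (2*δ) := by norm_num
  have hcov : Set.Ioc 0 (2*π) ∩ F ⊆ (Icc 0 π ∩ F) ∪ (Icc π (2*π) ∩ F) := by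
    rintro t ⟨⟨h0, h2⟩, hFt⟩
    rcases le_or_gt t π with h | h
    · exact Or.inl ⟨⟨h0.le, h⟩, hFt⟩
    · exact Or.inr ⟨⟨h.le, h2⟩, hFt⟩
  calc volume (Set.Ioc 0 (2*π) ∩ F) ≤ volume ((Icc 0 π ∩ F) ∪ (Icc π (2*π) ∩ F)) :=
        measure_mono hcov
    _ ≤ volume (Icc 0 π ∩ F) + volume (Icc π (2*π) ∩ F) := measure_union_le _ _
    _ ≤ ENNReal.ofReal 2 * ENNReal.ofReal (2*δ) + ENNReal.ofReal 2 * ENNReal.ofReal (2*δ) :=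
        add_le_add (key _ measurableSet_Icc Real.injOn_cos)
          (key _ measurableSet_Icc injOn_cos_branch2)
    _ = ENNReal.ofReal (8 * δ) := by
        rw [← ENNReal.ofReal_mul (by norm_num),
          ← ENNReal.ofReal_add (by positivity) (by positivity)]
        congr 1; ring


/-- Tonelli + translation invariance. -/
lemma tonelli_sin {g : ℝ → ℝ≥0∞} (hg : Measurable g) {V : Set ℝ} (hV : MeasurableSet V) :
    ∫⁻ x, ∫⁻ t in V, g (x - Real.sin t) = volume V * ∫⁻ y, g y := by
  have hm : Measurable (Function.uncurry fun (x t : ℝ) => g (x - Real.sin t)) :=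
    hg.comp (measurable_fst.sub (Real.measurable_sin.comp measurable_snd))
  rw [lintegral_lintegral_swap hm.aemeasurable]
  have hinner : ∀ t : ℝ, ∫⁻ x, g (x - Real.sin t) = ∫⁻ y, g y := fun t =>
    (measurePreserving_sub_right volume (Real.sin t)).lintegral_comp hg
  calc ∫⁻ t in V, ∫⁻ x, g (x - Real.sin t)
      = ∫⁻ t in V, ∫⁻ y, g y := by
        exact setLIntegral_congr_fun hV (fun t _ => hinner t)
    _ = volume V * ∫⁻ y, g y := by rw [setLIntegral_const, mul_comm]

/-- Null sets are a.e. avoided by `x - φ t` for a.e. `x`. -/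
lemma ae_slice {N : Set ℝ} (hN : MeasurableSet N) (hN0 : volume N = 0)
    {φ : ℝ → ℝ} (hφ : Measurable φ) (V : Set ℝ) :
    ∀ᵐ x : ℝ, ∀ᵐ t ∂(volume.restrict V), x - φ t ∉ N := by
  set s : Set (ℝ × ℝ) := {p | p.1 - φ p.2 ∈ N} with hsdef
  have hsm : MeasurableSet s := (measurable_fst.sub (hφ.comp measurable_snd)) hN
  have hprod : (volume.prod (volume.restrict V)) s = 0 := by
    rw [Measure.prod_apply_symm hsm]
    have hzero : ∀ t : ℝ, volume ((fun x : ℝ => (x, t)) ⁻¹' s) = 0 := by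
      intro t
      have heq : ((fun x : ℝ => (x, t)) ⁻¹' s) = (fun x : ℝ => x - φ t) ⁻¹' N := rfl
      rw [heq, (measurePreserving_sub_right volume (φ t)).measure_preimage hN.nullMeasurableSet]
      exact hN0
    simp only [hzero]
    simp
  have hae : ∀ᵐ p ∂(volume.prod (volume.restrict V)), p.1 - φ p.2 ∉ N := by
    rw [ae_iff]
    simpa [hsdef] using hprod
  exact MeasureTheory.Measure.ae_ae_of_ae_prod hae

lemma measurable_slice {g : ℝ → ℝ≥0∞} (hg : Measurable g) {V : Set ℝ} :
    Measurable fun x => ∫⁻ t in V, g (x - Real.sin t) :=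
  Measurable.lintegral_prod_right
    (hg.comp (measurable_fst.sub (Real.measurable_sin.comp measurable_snd)))

lemma main_est {g₁ g₂ : ℝ → ℝ≥0∞} (hg₁ : Measurable g₁) (hg₂ : Measurable g₂)
    {l : ℝ} (hl : 0 < l) :
    volume {x : ℝ | ENNReal.ofReal l < (ENNReal.ofReal (2*π))⁻¹ *
        ∫⁻ t in Set.Ioc 0 (2*π), g₁ (x - Real.cos t) * g₂ (x - Real.sin t)}
      ≤ ENNReal.ofReal 24 * ENNReal.ofReal l ^ (-(2:ℝ)) * (essSup g₁ volume) ^ 2 *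
        (∫⁻ y, g₂ y) ^ 2 := by
  have hπ := Real.pi_pos
  set M₁ : ℝ≥0∞ := essSup g₁ volume with hM₁def
  set M₂ : ℝ≥0∞ := ∫⁻ y, g₂ y with hM₂def
  set L : ℝ≥0∞ := ENNReal.ofReal l with hLdef
  set S : Set ℝ := Set.Ioc 0 (2*π) with hSdef
  set c : ℝ≥0∞ := ENNReal.ofReal (2*π) with hcdef
  have hL0 : L ≠ 0 := by simp [hLdef, hl]
  have hLtop : L ≠ ⊤ := ENNReal.ofReal_ne_top
  have hc0 : c ≠ 0 := by simp [hcdef]; positivity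
  have hctop : c ≠ ⊤ := ENNReal.ofReal_ne_top
  have hrpow : L ^ (-(2:ℝ)) = (L * L)⁻¹ := by
    rw [ENNReal.rpow_neg, show ((2:ℝ)) = ((2:ℕ):ℝ) by norm_num, ENNReal.rpow_natCast, pow_two]
  -- degenerate cases
  by_cases hM₁0 : M₁ = 0
  · have hae0 : ∀ᵐ y : ℝ, g₁ y = 0 := by
      filter_upwards [ae_le_essSup (μ := volume) g₁] with y hy
      rw [← hM₁def, hM₁0] at hy
      simpa using hy
    have hNmeas : MeasurableSet {y : ℝ | ¬ g₁ y = 0} :=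
      (hg₁ (measurableSet_singleton 0)).compl
    have hT0 : ∀ᵐ x : ℝ, (c⁻¹ * ∫⁻ t in S, g₁ (x - Real.cos t) * g₂ (x - Real.sin t)) = 0 := by
      filter_upwards [ae_slice hNmeas (ae_iff.1 hae0) Real.measurable_cos S] with x hx
      have hzero : (fun t => g₁ (x - Real.cos t) * g₂ (x - Real.sin t))
          =ᵐ[volume.restrict S] 0 := by
        filter_upwards [hx] with t ht
        have : g₁ (x - Real.cos t) = 0 := not_not.1 ht
        simp [this]
      rw [lintegral_congr_ae hzero]; simp
    have h0 : volume {x : ℝ | L < c⁻¹ *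
        ∫⁻ t in S, g₁ (x - Real.cos t) * g₂ (x - Real.sin t)} = 0 := by
      refine measure_mono_null (fun x hx => ?_) (ae_iff.1 hT0)
      intro h0x
      rw [Set.mem_setOf_eq, h0x] at hx
      simp at hx
    rw [h0]; exact zero_le
  by_cases hM₂0 : M₂ = 0
  · have hae0 : ∀ᵐ y : ℝ, g₂ y = 0 := (lintegral_eq_zero_iff hg₂).1 (hM₂def.symm.trans hM₂0)
    have hNmeas : MeasurableSet {y : ℝ | ¬ g₂ y = 0} :=
      (hg₂ (measurableSet_singleton 0)).compl
    have hT0 : ∀ᵐ x : ℝ, (c⁻¹ * ∫⁻ t in S, g₁ (x - Real.cos t) * g₂ (x - Real.sin t)) = 0 := by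
      filter_upwards [ae_slice hNmeas (ae_iff.1 hae0) Real.measurable_sin S] with x hx
      have hzero : (fun t => g₁ (x - Real.cos t) * g₂ (x - Real.sin t))
          =ᵐ[volume.restrict S] 0 := by
        filter_upwards [hx] with t ht
        have : g₂ (x - Real.sin t) = 0 := not_not.1 ht
        simp [this]
      rw [lintegral_congr_ae hzero]; simp
    have h0 : volume {x : ℝ | L < c⁻¹ *
        ∫⁻ t in S, g₁ (x - Real.cos t) * g₂ (x - Real.sin t)} = 0 := by
      refine measure_mono_null (fun x hx => ?_) (ae_iff.1 hT0)
      intro h0x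
      rw [Set.mem_setOf_eq, h0x] at hx
      simp at hx
    rw [h0]; exact zero_le
  by_cases hM₂top : M₂ = ⊤
  · have hRtop : ENNReal.ofReal 24 * L ^ (-(2:ℝ)) * M₁ ^ 2 * M₂ ^ 2 = ⊤ := by
      rw [hM₂top, ENNReal.top_pow (by norm_num), ENNReal.mul_top]
      refine mul_ne_zero (mul_ne_zero ?_ ?_) (pow_ne_zero _ hM₁0)
      · simp
      · rw [hrpow]
        exact ENNReal.inv_ne_zero.2 (ENNReal.mul_ne_top hLtop hLtop)
    rw [hRtop]; exact le_top
  by_cases hM₁top : M₁ = ⊤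
  · have hRtop : ENNReal.ofReal 24 * L ^ (-(2:ℝ)) * M₁ ^ 2 * M₂ ^ 2 = ⊤ := by
      rw [hM₁top, ENNReal.top_pow (by norm_num), ENNReal.mul_top, ENNReal.top_mul]
      · exact pow_ne_zero _ hM₂0
      · refine mul_ne_zero ?_ ?_
        · simp
        · rw [hrpow]
          exact ENNReal.inv_ne_zero.2 (ENNReal.mul_ne_top hLtop hLtop)
    rw [hRtop]; exact le_top
  -- main case
  have hAmeas : Measurable fun x => ∫⁻ t in S, g₂ (x - Real.sin t) := measurable_slice hg₂
  have hNmeas : MeasurableSet {y : ℝ | ¬ g₁ y ≤ M₁} := by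
    have heq : {y : ℝ | ¬ g₁ y ≤ M₁} = {y | M₁ < g₁ y} := by ext y; simp [not_le]
    rw [heq]; exact measurableSet_lt measurable_const hg₁
  have hNnull : volume {y : ℝ | ¬ g₁ y ≤ M₁} = 0 := by
    refine ae_iff.1 ?_
    rw [hM₁def]
    exact ae_le_essSup g₁
  set B : ℝ → ℝ≥0∞ := fun x => c⁻¹ * (M₁ * ∫⁻ t in S, g₂ (x - Real.sin t)) with hBdef
  have hBmeas : Measurable B := (hAmeas.const_mul M₁).const_mul c⁻¹
  have hdom : ∀ᵐ x : ℝ, (c⁻¹ * ∫⁻ t in S, g₁ (x - Real.cos t) * g₂ (x - Real.sin t))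
      ≤ B x := by
    filter_upwards [ae_slice hNmeas hNnull Real.measurable_cos S] with x hx
    refine mul_le_mul_right ?_ _
    calc ∫⁻ t in S, g₁ (x - Real.cos t) * g₂ (x - Real.sin t)
        ≤ ∫⁻ t in S, M₁ * g₂ (x - Real.sin t) := by
          refine lintegral_mono_ae ?_
          filter_upwards [hx] with t ht
          exact mul_le_mul_left (not_not.1 ht) _
      _ = M₁ * ∫⁻ t in S, g₂ (x - Real.sin t) := lintegral_const_mul' _ _ hM₁top
  have hmono : volume {x : ℝ | L < c⁻¹ *
        ∫⁻ t in S, g₁ (x - Real.cos t) * g₂ (x - Real.sin t)}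
      ≤ volume {x : ℝ | L < B x} := by
    have hsub : {x : ℝ | L < c⁻¹ * ∫⁻ t in S, g₁ (x - Real.cos t) * g₂ (x - Real.sin t)}
        ⊆ {x : ℝ | L < B x} ∪ {x : ℝ | ¬ (c⁻¹ *
            ∫⁻ t in S, g₁ (x - Real.cos t) * g₂ (x - Real.sin t)) ≤ B x} := by
      intro x hx
      by_cases h : (c⁻¹ * ∫⁻ t in S, g₁ (x - Real.cos t) * g₂ (x - Real.sin t)) ≤ B x
      · exact Or.inl (lt_of_lt_of_le hx h)
      · exact Or.inr h
    calc volume {x : ℝ | L < c⁻¹ * ∫⁻ t in S, g₁ (x - Real.cos t) * g₂ (x - Real.sin t)}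
        ≤ volume ({x : ℝ | L < B x} ∪ {x : ℝ | ¬ (c⁻¹ *
            ∫⁻ t in S, g₁ (x - Real.cos t) * g₂ (x - Real.sin t)) ≤ B x}) := measure_mono hsub
      _ ≤ volume {x : ℝ | L < B x} + volume {x : ℝ | ¬ (c⁻¹ *
            ∫⁻ t in S, g₁ (x - Real.cos t) * g₂ (x - Real.sin t)) ≤ B x} := measure_union_le _ _
      _ = volume {x : ℝ | L < B x} := by rw [ae_iff.1 hdom, add_zero]
  have hSmeas : MeasurableSet S := by rw [hSdef]; exact measurableSet_Ioc
  have hvolS : volume S = c := by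
    rw [hSdef, Real.volume_Ioc, hcdef]; norm_num
  have hIA : ∫⁻ x, (∫⁻ t in S, g₂ (x - Real.sin t)) = c * M₂ := by
    rw [tonelli_sin hg₂ hSmeas, hvolS]
  set a : ℝ := M₁.toReal with hadef
  set b : ℝ := M₂.toReal with hbdef
  have ha : 0 < a := ENNReal.toReal_pos hM₁0 hM₁top
  have hb : 0 < b := ENNReal.toReal_pos hM₂0 hM₂top
  by_cases hcase : L ≤ 2 * M₁ * M₂
  · -- easy regime : Chebyshev with the full average
    have hab : l ≤ 2*a*b := by
      have h := ENNReal.toReal_mono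
        (ENNReal.mul_ne_top (ENNReal.mul_ne_top (by norm_num) hM₁top) hM₂top) hcase
      rw [ENNReal.toReal_mul, ENNReal.toReal_mul, ENNReal.toReal_ofNat, hLdef,
        ENNReal.toReal_ofReal hl.le] at h
      exact h
    have hcheb : volume {x : ℝ | L < B x} ≤ (∫⁻ x, B x) / L := by
      refine le_trans (measure_mono ?_) (meas_ge_le_lintegral_div hBmeas.aemeasurable hL0 hLtop)
      intro x hx
      simp only [Set.mem_setOf_eq] at hx ⊢
      exact hx.le
    have hIB : ∫⁻ x, B x = M₁ * M₂ := by
      simp only [hBdef]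
      rw [lintegral_const_mul' _ _ (ENNReal.inv_ne_top.2 hc0),
        lintegral_const_mul' _ _ hM₁top, hIA]
      calc c⁻¹ * (M₁ * (c * M₂)) = (c⁻¹ * c) * (M₁ * M₂) := by ring
        _ = M₁ * M₂ := by rw [ENNReal.inv_mul_cancel hc0 hctop, one_mul]
    have hfin : M₁ * M₂ / L ≤ ENNReal.ofReal 24 * L ^ (-(2:ℝ)) * M₁ ^ 2 * M₂ ^ 2 := by
      rw [hrpow]
      have hLHS : M₁ * M₂ / L ≠ ⊤ :=
        (ENNReal.div_lt_top (ENNReal.mul_ne_top hM₁top hM₂top) hL0).ne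
      have hRHS : ENNReal.ofReal 24 * (L*L)⁻¹ * M₁ ^ 2 * M₂ ^ 2 ≠ ⊤ := by
        refine ENNReal.mul_ne_top (ENNReal.mul_ne_top (ENNReal.mul_ne_top
          ENNReal.ofReal_ne_top (ENNReal.inv_ne_top.2 (mul_ne_zero hL0 hL0))) ?_) ?_
        · exact ENNReal.pow_ne_top hM₁top
        · exact ENNReal.pow_ne_top hM₂top
      rw [← ENNReal.toReal_le_toReal hLHS hRHS]
      simp only [ENNReal.toReal_div, ENNReal.toReal_mul, ENNReal.toReal_inv,
        ENNReal.toReal_pow, hLdef, ENNReal.toReal_ofReal hl.le,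
        ENNReal.toReal_ofReal (by norm_num : (0:ℝ) ≤ 24)]
      rw [← hadef, ← hbdef]
      have hid : 24*(l*l)⁻¹*a^2*b^2 = 24*a^2*b^2/(l*l) := by
        rw [div_eq_mul_inv]; ring
      rw [div_le_iff₀ hl, hid, div_mul_eq_mul_div, le_div_iff₀ (by positivity)]
      have key := mul_le_mul_of_nonneg_left hab (mul_nonneg ha.le hb.le)
      nlinarith [key, mul_pos ha hb, mul_pos hl hl, sq_nonneg (a*b)]
    calc volume {x : ℝ | L < c⁻¹ * ∫⁻ t in S, g₁ (x - Real.cos t) * g₂ (x - Real.sin t)}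
        ≤ volume {x : ℝ | L < B x} := hmono
      _ ≤ (∫⁻ x, B x) / L := hcheb
      _ = M₁ * M₂ / L := by rw [hIB]
      _ ≤ _ := hfin
  · -- hard regime
    push_neg at hcase
    have hab : 2*a*b < l := by
      have h := (ENNReal.toReal_lt_toReal
        (ENNReal.mul_ne_top (ENNReal.mul_ne_top (by norm_num) hM₁top) hM₂top) hLtop).2 hcase
      rw [ENNReal.toReal_mul, ENNReal.toReal_mul, ENNReal.toReal_ofNat, hLdef,
        ENNReal.toReal_ofReal hl.le] at h
      exact h
    set δ : ℝ := 3*a*b/(π*l) with hδdef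
    have hδ0 : 0 < δ := by positivity
    have hδhalf : δ ≤ 1/2 := by
      rw [hδdef, div_le_iff₀ (by positivity)]
      nlinarith [Real.pi_gt_three, hl, hab, mul_pos ha hb]
    set E : Set ℝ := {t | δ ≤ |Real.cos t|} with hEdef
    have hE : MeasurableSet E := measurableSet_le measurable_const Real.measurable_cos.abs
    have hEc : Eᶜ = {t | |Real.cos t| < δ} := by ext t; simp [hEdef, not_le]
    have hsplit : ∀ x : ℝ, (∫⁻ t in S, g₂ (x - Real.sin t))
        = (∫⁻ t in S ∩ E, g₂ (x - Real.sin t)) + ∫⁻ t in S ∩ Eᶜ, g₂ (x - Real.sin t) := by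
      intro x
      have h := (lintegral_add_compl (μ := volume.restrict S)
        (fun t => g₂ (x - Real.sin t)) hE).symm
      rw [Measure.restrict_restrict hE, Measure.restrict_restrict hE.compl,
        Set.inter_comm E S, Set.inter_comm Eᶜ S] at h
      exact h
    have htrans : ∀ x : ℝ, ∫⁻ y, g₂ (x - y) = M₂ := by
      intro x
      rw [hM₂def]
      exact (Measure.measurePreserving_sub_left volume x).lintegral_comp hg₂
    have hIgood : ∀ x : ℝ, c⁻¹ * (M₁ * ∫⁻ t in S ∩ E, g₂ (x - Real.sin t))
        ≤ ENNReal.ofReal (l/2) := by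
      intro x
      have h1 : ∫⁻ t in S ∩ E, g₂ (x - Real.sin t)
          ≤ 3 * (ENNReal.ofReal δ⁻¹ * M₂) := by
        have h := sinE_bound hδ0 (fun y => g₂ (x - y))
        rw [htrans x] at h
        exact h
      calc c⁻¹ * (M₁ * ∫⁻ t in S ∩ E, g₂ (x - Real.sin t))
          ≤ c⁻¹ * (M₁ * (3 * (ENNReal.ofReal δ⁻¹ * M₂))) :=
            mul_le_mul_right (mul_le_mul_right h1 _) _
        _ ≤ ENNReal.ofReal (l/2) := by
          have hfinL : c⁻¹ * (M₁ * (3 * (ENNReal.ofReal δ⁻¹ * M₂))) ≠ ⊤ := by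
            refine ENNReal.mul_ne_top (ENNReal.inv_ne_top.2 hc0) (ENNReal.mul_ne_top hM₁top
              (ENNReal.mul_ne_top (by norm_num) (ENNReal.mul_ne_top
                ENNReal.ofReal_ne_top hM₂top)))
          rw [← ENNReal.toReal_le_toReal hfinL ENNReal.ofReal_ne_top]
          simp only [ENNReal.toReal_mul, ENNReal.toReal_inv, hcdef, ENNReal.toReal_ofNat,
            ENNReal.toReal_ofReal (by positivity : (0:ℝ) ≤ 2*π),
            ENNReal.toReal_ofReal (by positivity : (0:ℝ) ≤ δ⁻¹),
            ENNReal.toReal_ofReal (by positivity : (0:ℝ) ≤ l/2)]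
          refine le_of_eq ?_
          rw [hδdef]
          field_simp
          ring
    set G : ℝ → ℝ≥0∞ := fun x => c⁻¹ * (M₁ * ∫⁻ t in S ∩ Eᶜ, g₂ (x - Real.sin t)) with hGdef
    have hGmeas : Measurable G := ((measurable_slice hg₂).const_mul M₁).const_mul c⁻¹
    have hsubset : {x : ℝ | L < B x} ⊆ {x : ℝ | ENNReal.ofReal (l/2) ≤ G x} := by
      intro x hx
      rw [Set.mem_setOf_eq] at hx ⊢
      have hBx : B x ≤ ENNReal.ofReal (l/2) + G x := by
        simp only [hBdef, hGdef]
        rw [hsplit x, mul_add, mul_add]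
        exact add_le_add (hIgood x) le_rfl
      have hL2 : L = ENNReal.ofReal (l/2) + ENNReal.ofReal (l/2) := by
        rw [← ENNReal.ofReal_add (by positivity) (by positivity)]
        rw [hLdef]; congr 1; ring
      by_contra hcon
      push_neg at hcon
      have hlt : L < L := lt_of_lt_of_le hx (hBx.trans (by
        rw [hL2]; exact add_le_add le_rfl hcon.le))
      exact lt_irrefl _ hlt
    have hcheb : volume {x : ℝ | ENNReal.ofReal (l/2) ≤ G x}
        ≤ (∫⁻ x, G x) / ENNReal.ofReal (l/2) :=
      meas_ge_le_lintegral_div hGmeas.aemeasurable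
        (by simp [ENNReal.ofReal_eq_zero, not_le]; positivity) ENNReal.ofReal_ne_top
    have hIG : ∫⁻ x, G x ≤ c⁻¹ * (M₁ * (ENNReal.ofReal (8*δ) * M₂)) := by
      simp only [hGdef]
      rw [lintegral_const_mul' _ _ (ENNReal.inv_ne_top.2 hc0),
        lintegral_const_mul' _ _ hM₁top]
      refine mul_le_mul_right (mul_le_mul_right ?_ _) _
      rw [tonelli_sin hg₂ (hSmeas.inter hE.compl)]
      refine mul_le_mul_left ?_ _
      rw [hEc]
      exact cosF_bound hδ0 hδhalf
    have hfin : (c⁻¹ * (M₁ * (ENNReal.ofReal (8*δ) * M₂))) / ENNReal.ofReal (l/2)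
        ≤ ENNReal.ofReal 24 * L ^ (-(2:ℝ)) * M₁ ^ 2 * M₂ ^ 2 := by
      rw [hrpow]
      have hnum : c⁻¹ * (M₁ * (ENNReal.ofReal (8*δ) * M₂)) ≠ ⊤ :=
        ENNReal.mul_ne_top (ENNReal.inv_ne_top.2 hc0) (ENNReal.mul_ne_top hM₁top
          (ENNReal.mul_ne_top ENNReal.ofReal_ne_top hM₂top))
      have hLHS : (c⁻¹ * (M₁ * (ENNReal.ofReal (8*δ) * M₂))) / ENNReal.ofReal (l/2) ≠ ⊤ :=
        (ENNReal.div_lt_top hnum (by simp [ENNReal.ofReal_eq_zero, not_le]; positivity)).ne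
      have hRHS : ENNReal.ofReal 24 * (L*L)⁻¹ * M₁ ^ 2 * M₂ ^ 2 ≠ ⊤ := by
        refine ENNReal.mul_ne_top (ENNReal.mul_ne_top (ENNReal.mul_ne_top
          ENNReal.ofReal_ne_top (ENNReal.inv_ne_top.2 (mul_ne_zero hL0 hL0))) ?_) ?_
        · exact ENNReal.pow_ne_top hM₁top
        · exact ENNReal.pow_ne_top hM₂top
      rw [← ENNReal.toReal_le_toReal hLHS hRHS]
      simp only [ENNReal.toReal_div, ENNReal.toReal_mul, ENNReal.toReal_inv,
        ENNReal.toReal_pow, hLdef, hcdef,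
        ENNReal.toReal_ofReal (by positivity : (0:ℝ) ≤ 2*π),
        ENNReal.toReal_ofReal (by positivity : (0:ℝ) ≤ 8*δ),
        ENNReal.toReal_ofReal (by positivity : (0:ℝ) ≤ l/2),
        ENNReal.toReal_ofReal (by norm_num : (0:ℝ) ≤ 24),
        ENNReal.toReal_ofReal hl.le]
      -- (2π)⁻¹ * (a * (8δ * b)) / (l/2) ≤ 24 * (l*l)⁻¹ * a^2 * b^2
      rw [← hadef, ← hbdef, hδdef]
      have hπ3 := Real.pi_gt_three
      rw [show (24:ℝ)*(l*l)⁻¹*a^2*b^2 = 24*a^2*b^2/(l*l) by rw [div_eq_mul_inv]; ring]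
      have heq : (2*π)⁻¹ * (a * (8*(3*a*b/(π*l))*b))/(l/2) = 24*a^2*b^2/(π^2*(l*l)) := by
        field_simp
        ring
      rw [heq, div_le_div_iff₀ (by positivity) (by positivity)]
      nlinarith [mul_nonneg (le_of_lt (mul_pos (mul_pos (mul_pos ha ha) (mul_pos hb hb))
        (mul_pos hl hl))) (by nlinarith [hπ3] : (0:ℝ) ≤ π^2 - 1)]
    calc volume {x : ℝ | L < c⁻¹ * ∫⁻ t in S, g₁ (x - Real.cos t) * g₂ (x - Real.sin t)}
        ≤ volume {x : ℝ | L < B x} := hmono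
      _ ≤ volume {x : ℝ | ENNReal.ofReal (l/2) ≤ G x} := measure_mono hsubset
      _ ≤ (∫⁻ x, G x) / ENNReal.ofReal (l/2) := hcheb
      _ ≤ (c⁻¹ * (M₁ * (ENNReal.ofReal (8*δ) * M₂))) / ENNReal.ofReal (l/2) :=
          ENNReal.div_le_div_right hIG _
      _ ≤ _ := hfin

theorem weak_type_at_K :
    ∃ C : ℝ, 0 < C ∧ ∀ f₁ f₂ : ℝ → ℝ, Measurable f₁ → Measurable f₂ →
      (∀ x, 0 ≤ f₁ x) → (∀ x, 0 ≤ f₂ x) →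
      ∀ l : ℝ, 0 < l →
      volume {x : ℝ | ENNReal.ofReal l < T2 f₁ f₂ x} ≤ ENNReal.ofReal C *
        ENNReal.ofReal l ^ (-(2 : ℝ)) *
        lpNorm ∞ (fun x => ENNReal.ofReal (f₁ x)) ^ 2 *
        lpNorm 1 (fun x => ENNReal.ofReal (f₂ x)) ^ 2 := by
  refine ⟨24, by norm_num, ?_⟩
  intro f₁ f₂ hf₁ hf₂ _ _ l hl
  have h1 : lpNorm ∞ (fun x => ENNReal.ofReal (f₁ x))
      = essSup (fun x => ENNReal.ofReal (f₁ x)) volume := by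
    simp [_root_.lpNorm]
  have h2 : lpNorm 1 (fun x => ENNReal.ofReal (f₂ x))
      = ∫⁻ y, ENNReal.ofReal (f₂ y) := by
    simp [_root_.lpNorm]
  rw [h1, h2]
  exact main_est hf₁.ennreal_ofReal hf₂.ennreal_ofReal hl
end

section
/- There is no finite constant C > 0 such that ‖T(f₁,f₂)‖_2 ≤ C ‖f₁‖_∞ ‖f₂‖_1 holds for all nonnegative measurable functions f₁, f₂ on ℝ; that is, in dimension n = 2 the bilinear spherical average T fails to be of strong type at the point K = (0, 1; 1/2). -/
open MeasureTheory ENNReal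

/-- Mean value estimate for `arcsin`. -/
lemma arcsin_sub_ge {u v : ℝ} (h0 : 0 ≤ u) (huv : u < v) (hv : v ≤ 1) :
    (v - u) / Real.sqrt (1 - u ^ 2) ≤ Real.arcsin v - Real.arcsin u := by
  obtain ⟨c, hc, hceq⟩ := exists_hasDerivAt_eq_slope Real.arcsin
    (fun y => 1 / Real.sqrt (1 - y ^ 2)) huv
    Real.continuous_arcsin.continuousOn
    (fun y hy => Real.hasDerivAt_arcsin
      (by nlinarith [hy.1, hy.2] : y ≠ -1)
      (by nlinarith [hy.1, hy.2] : y ≠ 1))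
  have hc1 : c < 1 := lt_of_lt_of_le hc.2 hv
  have hc0 : 0 ≤ c := h0.trans hc.1.le
  have h1 : 0 < 1 - c ^ 2 := by nlinarith
  have h2 : 1 - c ^ 2 ≤ 1 - u ^ 2 := by nlinarith [hc.1]
  have hs1 : 0 < Real.sqrt (1 - c ^ 2) := Real.sqrt_pos.2 h1
  have hs2 : Real.sqrt (1 - c ^ 2) ≤ Real.sqrt (1 - u ^ 2) := Real.sqrt_le_sqrt h2
  have hvu : (0:ℝ) < v - u := sub_pos.2 huv
  have hΔ : Real.arcsin v - Real.arcsin u = (v - u) / Real.sqrt (1 - c ^ 2) := by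
    have := hceq
    field_simp at this ⊢
    linarith [this]
  rw [hΔ]
  exact div_le_div_of_nonneg_left hvu.le hs1 hs2

lemma T2_pointwise (ε : ℝ) (hε0 : 0 < ε) (hε1 : ε < 1) {x : ℝ} (hx : x ∈ Set.Ioo ε 1) :
    ENNReal.ofReal ((2 * Real.pi)⁻¹ * (Real.sqrt (2 * (1 + ε - x)))⁻¹)
      ≤ T2 (fun _ => 1) ((Set.Ioo (0:ℝ) ε).indicator fun _ => ε⁻¹) x := by
  obtain ⟨hxε, hx1⟩ := hx
  have hπ := Real.pi_pos
  set u := x - ε with hu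
  have hu0 : 0 < u := by simp [hu]; linarith
  have huv : u < x := by simp [hu]; linarith
  have hv1 : x ≤ 1 := hx1.le
  set a := Real.arcsin u with haa
  set b := Real.arcsin x with hbb
  have ha0 : 0 < a := Real.arcsin_pos.2 hu0
  have hab : a < b := Real.strictMonoOn_arcsin
    ⟨by linarith, by linarith⟩ ⟨by linarith, by linarith⟩ huv
  have ha2 : -(Real.pi/2) ≤ a := Real.neg_pi_div_two_le_arcsin u
  have hb2 : b ≤ Real.pi/2 := Real.arcsin_le_pi_div_two x
  have hsina : Real.sin a = u := Real.sin_arcsin (by linarith) (by linarith)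
  have hsinb : Real.sin b = x := Real.sin_arcsin (by linarith) (by linarith)
  have hsub : Set.Ioo a b ⊆ Set.Ioc 0 (2*Real.pi) := fun t ht =>
    ⟨ha0.trans ht.1, ht.2.le.trans (by linarith)⟩
  have hsin : ∀ t ∈ Set.Ioo a b, x - Real.sin t ∈ Set.Ioo 0 ε := by
    intro t ht
    have h1 : Real.sin a < Real.sin t := Real.strictMonoOn_sin
      ⟨ha2, by linarith [ht.2]⟩ ⟨by linarith [ht.1], by linarith [ht.2]⟩ ht.1
    have h2 : Real.sin t < Real.sin b := Real.strictMonoOn_sin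
      ⟨by linarith [ht.1], by linarith [ht.2]⟩ ⟨by linarith, hb2⟩ ht.2
    rw [hsina] at h1; rw [hsinb] at h2
    exact ⟨by linarith, by simp [hu] at h1; linarith⟩
  -- lower bound the inner integral
  have hcongr : ∫⁻ t in Set.Ioo a b,
      ENNReal.ofReal ((fun (_ : ℝ) => (1:ℝ)) (x - Real.cos t)) *
        ENNReal.ofReal (((Set.Ioo (0:ℝ) ε).indicator fun _ => ε⁻¹) (x - Real.sin t))
      = ∫⁻ _ in Set.Ioo a b, ENNReal.ofReal ε⁻¹ := by
    refine setLIntegral_congr_fun measurableSet_Ioo (fun t ht => ?_)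
    rw [Set.indicator_of_mem (hsin t ht)]
    simp
  have hIlow : ENNReal.ofReal ε⁻¹ * ENNReal.ofReal (b - a)
      ≤ ∫⁻ t in Set.Ioc 0 (2*Real.pi),
          ENNReal.ofReal ((fun (_ : ℝ) => (1:ℝ)) (x - Real.cos t)) *
            ENNReal.ofReal (((Set.Ioo (0:ℝ) ε).indicator fun _ => ε⁻¹) (x - Real.sin t)) := by
    refine le_trans ?_ (lintegral_mono_set hsub)
    rw [hcongr, setLIntegral_const, Real.volume_Ioo]
  -- b - a is large
  have hsq : 0 < Real.sqrt (2 * (1 + ε - x)) := Real.sqrt_pos.2 (by linarith)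
  have hsqu : 0 < Real.sqrt (1 - u ^ 2) :=
    Real.sqrt_pos.2 (by nlinarith)
  have hba : ε / Real.sqrt (2 * (1 + ε - x)) ≤ b - a := by
    have h1 : (x - u) / Real.sqrt (1 - u ^ 2) ≤ b - a := arcsin_sub_ge hu0.le huv hv1
    have h2 : Real.sqrt (1 - u ^ 2) ≤ Real.sqrt (2 * (1 + ε - x)) :=
      Real.sqrt_le_sqrt (by nlinarith)
    have h3 : ε / Real.sqrt (2 * (1 + ε - x)) ≤ ε / Real.sqrt (1 - u ^ 2) :=
      div_le_div_of_nonneg_left hε0.le hsqu h2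
    have hxu : x - u = ε := by simp [hu]
    rw [hxu] at h1
    linarith
  -- combine
  unfold T2
  have step1 : ENNReal.ofReal ε⁻¹ * ENNReal.ofReal (ε / Real.sqrt (2 * (1 + ε - x)))
      ≤ ENNReal.ofReal ε⁻¹ * ENNReal.ofReal (b - a) :=
    mul_le_mul_right (ENNReal.ofReal_le_ofReal hba) _
  have hsimp : ENNReal.ofReal ε⁻¹ * ENNReal.ofReal (ε / Real.sqrt (2 * (1 + ε - x)))
      = ENNReal.ofReal ((Real.sqrt (2 * (1 + ε - x)))⁻¹) := by
    rw [← ENNReal.ofReal_mul (by positivity)]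
    congr 1
    field_simp
  calc ENNReal.ofReal ((2 * Real.pi)⁻¹ * (Real.sqrt (2 * (1 + ε - x)))⁻¹)
      = (ENNReal.ofReal (2 * Real.pi))⁻¹ *
          ENNReal.ofReal ((Real.sqrt (2 * (1 + ε - x)))⁻¹) := by
        rw [ENNReal.ofReal_mul (by positivity), ENNReal.ofReal_inv_of_pos (by positivity)]
    _ ≤ (ENNReal.ofReal (2 * Real.pi))⁻¹ *
          (∫⁻ t in Set.Ioc 0 (2*Real.pi),
            ENNReal.ofReal ((fun (_ : ℝ) => (1:ℝ)) (x - Real.cos t)) *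
              ENNReal.ofReal (((Set.Ioo (0:ℝ) ε).indicator fun _ => ε⁻¹) (x - Real.sin t))) := by
        refine mul_le_mul_right ?_ _
        rw [← hsimp]
        exact step1.trans hIlow

theorem not_strong_type_at_K :
    ¬ ∃ C : ℝ, 0 < C ∧ ∀ f₁ f₂ : ℝ → ℝ, Measurable f₁ → Measurable f₂ →
      (∀ x, 0 ≤ f₁ x) → (∀ x, 0 ≤ f₂ x) →
      lpNorm 2 (T2 f₁ f₂) ≤ ENNReal.ofReal C *
        lpNorm ∞ (fun x => ENNReal.ofReal (f₁ x)) *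
        lpNorm 1 (fun x => ENNReal.ofReal (f₂ x)) := by
  rintro ⟨C, hC, hbound⟩
  have hπ := Real.pi_pos
  set M : ℝ := 8 * Real.pi ^ 2 * (C + 1) ^ 2 with hM
  have hM0 : 0 < M := by positivity
  set ε : ℝ := Real.exp (-M) with hεdef
  have hε0 : 0 < ε := Real.exp_pos _
  have hε1 : ε < 1 := by
    rw [hεdef]
    exact Real.exp_lt_one_iff.2 (by linarith)
  set f₁ : ℝ → ℝ := fun _ => 1 with hf₁
  set f₂ : ℝ → ℝ := (Set.Ioo (0:ℝ) ε).indicator (fun _ => ε⁻¹) with hf₂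
  have key := hbound f₁ f₂ measurable_const
    (measurable_const.indicator measurableSet_Ioo)
    (fun _ => zero_le_one)
    (fun x => Set.indicator_nonneg (fun _ _ => by positivity) x)
  -- RHS = ofReal C
  have hinf : lpNorm ∞ (fun x => ENNReal.ofReal (f₁ x)) = 1 := by
    simp only [_root_.lpNorm, if_pos rfl, hf₁, ENNReal.ofReal_one]
    exact essSup_const 1 (NeZero.ne _)
  have hone : lpNorm 1 (fun x => ENNReal.ofReal (f₂ x)) = 1 := by
    have h1 : (fun x => ENNReal.ofReal (f₂ x))
        = (Set.Ioo (0:ℝ) ε).indicator (fun _ => ENNReal.ofReal ε⁻¹) := by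
      funext x
      simp only [hf₂, Set.indicator_apply]
      split_ifs <;> simp
    simp only [_root_.lpNorm, ENNReal.one_ne_top, if_false, ENNReal.toReal_one, ENNReal.rpow_one,
      one_div_one, h1]
    rw [lintegral_indicator measurableSet_Ioo, setLIntegral_const, Real.volume_Ioo,
      ← ENNReal.ofReal_mul (by positivity), sub_zero, inv_mul_cancel₀ hε0.ne',
      ENNReal.ofReal_one]
  have hrhs : ENNReal.ofReal C *
      lpNorm ∞ (fun x => ENNReal.ofReal (f₁ x)) *
      lpNorm 1 (fun x => ENNReal.ofReal (f₂ x)) = ENNReal.ofReal C := by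
    rw [hinf, hone, mul_one, mul_one]
  -- LHS lower bound
  -- pointwise squared bound on Ioo ε 1
  have hsqbd : ∀ x ∈ Set.Ioo ε 1,
      ENNReal.ofReal ((8 * Real.pi ^ 2)⁻¹ * (1 + ε - x)⁻¹) ≤ T2 f₁ f₂ x ^ (2:ℝ) := by
    intro x hx
    have hpt := T2_pointwise ε hε0 hε1 hx
    have h2 : ENNReal.ofReal ((2 * Real.pi)⁻¹ * (Real.sqrt (2 * (1 + ε - x)))⁻¹) ^ (2:ℝ)
        ≤ T2 f₁ f₂ x ^ (2:ℝ) := ENNReal.rpow_le_rpow hpt (by norm_num)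
    have hs : (0:ℝ) < 1 + ε - x := by linarith [hx.2]
    have hrw : ENNReal.ofReal ((2 * Real.pi)⁻¹ * (Real.sqrt (2 * (1 + ε - x)))⁻¹) ^ (2:ℝ)
        = ENNReal.ofReal ((8 * Real.pi ^ 2)⁻¹ * (1 + ε - x)⁻¹) := by
      rw [ENNReal.ofReal_rpow_of_nonneg (by positivity) (by norm_num)]
      congr 1
      have hexp : ((2 * Real.pi)⁻¹ * (Real.sqrt (2 * (1 + ε - x)))⁻¹) ^ (2:ℝ)
          = ((2 * Real.pi)⁻¹ * (Real.sqrt (2 * (1 + ε - x)))⁻¹) ^ (2:ℕ) := by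
        rw [← Real.rpow_natCast]; norm_num
      rw [hexp]
      have hsq : Real.sqrt (2 * (1 + ε - x)) ^ 2 = 2 * (1 + ε - x) :=
        Real.sq_sqrt (by linarith)
      rw [mul_pow, inv_pow, inv_pow, hsq, ← mul_inv, ← mul_inv]
      congr 1
      ring
    rw [← hrw]
    exact h2
  -- integral of the lower bound
  have hIoo : MeasurableSet (Set.Ioo ε 1) := measurableSet_Ioo
  have hintlow : ENNReal.ofReal ((C + 1) ^ 2) ≤ ∫⁻ x, T2 f₁ f₂ x ^ (2:ℝ) := by
    have step1 : ∫⁻ x in Set.Ioo ε 1, ENNReal.ofReal ((8 * Real.pi ^ 2)⁻¹ * (1 + ε - x)⁻¹)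
        ≤ ∫⁻ x, T2 f₁ f₂ x ^ (2:ℝ) :=
      le_trans (setLIntegral_mono' hIoo hsqbd) (setLIntegral_le_lintegral _ _)
    refine le_trans ?_ step1
    -- compute the lower integral
    have hcm : ∀ x : ℝ, ENNReal.ofReal ((8 * Real.pi ^ 2)⁻¹ * (1 + ε - x)⁻¹)
        = ENNReal.ofReal ((8 * Real.pi ^ 2)⁻¹) * ENNReal.ofReal ((1 + ε - x)⁻¹) := fun x =>
      ENNReal.ofReal_mul (by positivity)
    simp only [hcm]
    rw [lintegral_const_mul' _ _ ENNReal.ofReal_ne_top]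
    have hInt : IntegrableOn (fun x : ℝ => (1 + ε - x)⁻¹) (Set.Ioo ε 1) := by
      refine IntegrableOn.mono_set ?_ Set.Ioo_subset_Icc_self
      apply ContinuousOn.integrableOn_Icc
      refine ContinuousOn.inv₀ (by fun_prop) ?_
      intro x hx
      have := hx.1; have := hx.2
      simp only [Set.mem_Icc] at hx
      have : ε ≤ x := hx.1
      have : x ≤ 1 := hx.2
      nlinarith [hε0]
    have hnn : 0 ≤ᵐ[volume.restrict (Set.Ioo ε 1)] fun x : ℝ => (1 + ε - x)⁻¹ := by
      filter_upwards [ae_restrict_mem hIoo] with x hx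
      simp only [Pi.zero_apply]
      have h := hx.2
      exact inv_nonneg.2 (by linarith)
    have heq : ∫⁻ x in Set.Ioo ε 1, ENNReal.ofReal ((1 + ε - x)⁻¹)
        = ENNReal.ofReal (∫ x in Set.Ioo ε 1, (1 + ε - x)⁻¹) :=
      (ofReal_integral_eq_lintegral_ofReal hInt hnn).symm
    have hval : ∫ x in Set.Ioo ε 1, (1 + ε - x)⁻¹ = M := by
      rw [← integral_Ioc_eq_integral_Ioo, ← intervalIntegral.integral_of_le hε1.le]
      have hsub : (∫ x in ε..1, (1 + ε - x)⁻¹) = ∫ x in (1 + ε - 1)..(1 + ε - ε), x⁻¹ :=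
        intervalIntegral.integral_comp_sub_left (fun y => y⁻¹) (1 + ε)
      rw [hsub, show (1 + ε - 1 : ℝ) = ε by ring, show (1 + ε - ε : ℝ) = 1 by ring,
        integral_inv (by
          rw [Set.uIcc_of_le hε1.le]
          intro h
          exact absurd h.1 (not_le.2 hε0)),
        hεdef]
      rw [one_div, ← Real.exp_neg, neg_neg, Real.log_exp]
    rw [heq, hval, ← ENNReal.ofReal_mul (by positivity)]
    apply ENNReal.ofReal_le_ofReal
    rw [hM]
    have hπ2 : (0:ℝ) < Real.pi ^ 2 := by positivity
    field_simp
    exact le_rfl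
  -- conclude
  have hlp : lpNorm 2 (T2 f₁ f₂) = (∫⁻ x, T2 f₁ f₂ x ^ (2:ℝ)) ^ ((1:ℝ)/2) := by
    simp [_root_.lpNorm]
  have hlhs : ENNReal.ofReal (C + 1) ≤ lpNorm 2 (T2 f₁ f₂) := by
    rw [hlp]
    have h1 : ENNReal.ofReal ((C + 1) ^ 2) ^ ((1:ℝ)/2)
        ≤ (∫⁻ x, T2 f₁ f₂ x ^ (2:ℝ)) ^ ((1:ℝ)/2) :=
      ENNReal.rpow_le_rpow hintlow (by norm_num)
    have h2 : ENNReal.ofReal ((C + 1) ^ 2) ^ ((1:ℝ)/2) = ENNReal.ofReal (C + 1) := by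
      rw [ENNReal.ofReal_rpow_of_nonneg (by positivity) (by norm_num)]
      congr 1
      rw [show ((C+1)^2 : ℝ) = (C+1) ^ ((2:ℕ):ℝ) from (Real.rpow_natCast _ 2).symm,
        ← Real.rpow_mul (by linarith)]
      norm_num
    rw [← h2]
    exact h1
  rw [hrhs] at key
  have : ENNReal.ofReal (C + 1) ≤ ENNReal.ofReal C := hlhs.trans key
  have hlt : ENNReal.ofReal C < ENNReal.ofReal (C + 1) :=
    (ENNReal.ofReal_lt_ofReal_iff (by linarith)).2 (lt_add_one C)
  exact absurd this (not_le.2 hlt)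
end

section
/- There is no finite constant C > 0 such that ‖T(f₁,f₂)‖_{3/2} ≤ C ‖f₁‖_3 ‖f₂‖_1 holds for all nonnegative measurable functions f₁, f₂ on ℝ; that is, in dimension n = 2 the bilinear spherical average T fails to be of strong type at the point G = (1/3, 1; 2/3). -/
open MeasureTheory ENNReal

namespace NST
open Real Set
open Real Set

def Ij (j : ℕ) : Set ℝ := Icc (1 - 3*((4:ℝ)^j)⁻¹) (1 - ((4:ℝ)^j)⁻¹)
def Ej (j : ℕ) : Set ℝ := Icc (1 - 2*((16:ℝ)^j)⁻¹) (1 - ((16:ℝ)^j)⁻¹)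

lemma Ij_disj : ∀ i j : ℕ, i < j → ∀ y : ℝ, y ∈ Ij i → y ∉ Ij j := by
  intro i j hij y hyi hyj
  have h1 : y ≤ 1 - ((4:ℝ)^i)⁻¹ := hyi.2
  have h2 : 1 - 3*((4:ℝ)^j)⁻¹ ≤ y := hyj.1
  have hpi : (0:ℝ) < 4^i := by positivity
  have hpj : (0:ℝ) < 4^j := by positivity
  have h4 : (4:ℝ)^i * 4 ≤ 4^j := by
    calc (4:ℝ)^i * 4 = 4^(i+1) := by ring
    _ ≤ 4^j := by
      apply pow_le_pow_right₀ (by norm_num) hij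
  have e1 : (4:ℝ)^i * ((4:ℝ)^i)⁻¹ = 1 := mul_inv_cancel₀ hpi.ne'
  have e2 : (4:ℝ)^j * ((4:ℝ)^j)⁻¹ = 1 := mul_inv_cancel₀ hpj.ne'
  nlinarith [mul_pos hpi hpj, inv_pos.mpr hpi, inv_pos.mpr hpj]

lemma Ej_disj : ∀ i j : ℕ, i < j → ∀ y : ℝ, y ∈ Ej i → y ∉ Ej j := by
  intro i j hij y hyi hyj
  have h1 : y ≤ 1 - ((16:ℝ)^i)⁻¹ := hyi.2
  have h2 : 1 - 2*((16:ℝ)^j)⁻¹ ≤ y := hyj.1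
  have hpi : (0:ℝ) < 16^i := by positivity
  have hpj : (0:ℝ) < 16^j := by positivity
  have h4 : (16:ℝ)^i * 16 ≤ 16^j := by
    calc (16:ℝ)^i * 16 = 16^(i+1) := by ring
    _ ≤ 16^j := by
      apply pow_le_pow_right₀ (by norm_num) hij
  have e1 : (16:ℝ)^i * ((16:ℝ)^i)⁻¹ = 1 := mul_inv_cancel₀ hpi.ne'
  have e2 : (16:ℝ)^j * ((16:ℝ)^j)⁻¹ = 1 := mul_inv_cancel₀ hpj.ne'
  nlinarith [mul_pos hpi hpj, inv_pos.mpr hpi, inv_pos.mpr hpj]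


set_option maxHeartbeats 1000000 in
lemma geom {K j : ℕ} (hj1 : 1 ≤ j) (hjK : j ≤ K) {x : ℝ} (hx : x ∈ Ej j) {t : ℝ}
    (ht : t ∈ Ioc (Real.arcsin x - ((16:ℝ)^K)⁻¹ * (4:ℝ)^j / 4) (Real.arcsin x)) :
    t ∈ Ioc 0 (2*Real.pi) ∧ x - Real.sin t ∈ Icc (0:ℝ) ((16:ℝ)^K)⁻¹ ∧
      x - Real.cos t ∈ Ij j := by
  set ε : ℝ := ((16:ℝ)^K)⁻¹ with hεdef
  set δ : ℝ := ε * (4:ℝ)^j / 4 with hδdef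
  set r : ℝ := ((4:ℝ)^j)⁻¹ with hrdef
  set q : ℝ := ((16:ℝ)^j)⁻¹ with hqdef
  have hp4 : (0:ℝ) < 4^j := by positivity
  have hp16 : (0:ℝ) < 16^j := by positivity
  have hr0 : 0 < r := by positivity
  have hq0 : 0 < q := by positivity
  have hε0 : 0 < ε := by positivity
  have hr4 : r * (4:ℝ)^j = 1 := inv_mul_cancel₀ hp4.ne'
  have hrle : r ≤ 1/4 := by
    rw [hrdef]
    rw [inv_le_comm₀ hp4 (by norm_num)]
    calc (1/4 : ℝ)⁻¹ = 4^1 := by norm_num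
    _ ≤ 4^j := pow_le_pow_right₀ (by norm_num) hj1
  have h16 : (16:ℝ)^j = (4:ℝ)^j * (4:ℝ)^j := by
    rw [← mul_pow]; norm_num
  have hqr : q = r^2 := by
    rw [hqdef, h16, mul_inv, hrdef]; ring
  have hqle : q ≤ r/4 := by nlinarith
  have hεq : ε ≤ q := by
    rw [hεdef, hqdef]
    apply inv_anti₀ hp16
    exact pow_le_pow_right₀ (by norm_num) hjK
  have hδ0 : 0 < δ := by positivity
  have hδr : δ ≤ r/4 := by
    have : δ ≤ q * 4^j / 4 := by
      rw [hδdef]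
      have := hp4
      gcongr
    calc δ ≤ q * 4^j / 4 := this
    _ = r^2 * 4^j / 4 := by rw [hqr]
    _ = r * (r * 4^j) / 4 := by ring
    _ = r / 4 := by rw [hr4]; ring
  have hx1 : 1 - 2*q ≤ x := hx.1
  have hx2 : x ≤ 1 - q := hx.2
  have hq16 : q ≤ 1/16 := by
    rw [hqdef, inv_le_comm₀ hp16 (by norm_num)]
    calc ((1:ℝ)/16)⁻¹ = 16^1 := by norm_num
    _ ≤ 16^j := pow_le_pow_right₀ (by norm_num) hj1
  have hx0 : (7:ℝ)/8 ≤ x := by linarith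
  have hxle1 : x ≤ 1 := by linarith
  have hxm1 : (-1:ℝ) ≤ x := by linarith
  set t₀ := Real.arcsin x with ht0def
  have hs : Real.sin t₀ = x := Real.sin_arcsin hxm1 hxle1
  have hc : Real.cos t₀ = Real.sqrt (1 - x^2) := Real.cos_arcsin x
  have ht0u : t₀ ≤ π/2 := Real.arcsin_le_pi_div_two x
  have ht00 : 0 ≤ t₀ := Real.arcsin_nonneg.mpr (by linarith)
  have ht0l : x ≤ t₀ := by
    have := Real.sin_le ht00
    rw [hs] at this; exact this
  -- cos t₀ bounds
  have hcu : Real.cos t₀ ≤ 2*r := by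
    rw [hc]
    have h1 : 1 - x^2 ≤ (2*r)^2 := by nlinarith
    calc Real.sqrt (1 - x^2) ≤ Real.sqrt ((2*r)^2) := Real.sqrt_le_sqrt h1
    _ = 2*r := Real.sqrt_sq (by positivity)
  have hcl : r ≤ Real.cos t₀ := by
    rw [hc]
    rw [show r = Real.sqrt (r^2) from (Real.sqrt_sq hr0.le).symm]
    apply Real.sqrt_le_sqrt
    nlinarith
  obtain ⟨ht1, ht2⟩ := ht
  have htpos : 0 < t := by
    have : t₀ - δ < t := ht1
    have hδsmall : δ ≤ 1/16 := by linarith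
    linarith
  have hπ : (3:ℝ) < π := Real.pi_gt_three
  have htle : t ≤ 2*π := by linarith
  -- Lipschitz-type bound: cos a ≤ cos t₀ + (t₀ - a) for a ≤ t₀, plus sin bounds
  have coslip : ∀ a : ℝ, 0 ≤ a → a ≤ t₀ → Real.cos a ≤ Real.cos t₀ + (t₀ - a) := by
    intro a ha0 hat
    have hkey : Real.cos a - Real.cos t₀
        = 2 * Real.sin ((a + t₀)/2) * Real.sin ((t₀ - a)/2) := by
      have := Real.cos_sub_cos a t₀
      have hss : Real.sin ((a - t₀)/2) = - Real.sin ((t₀ - a)/2) := by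
        rw [show (a - t₀)/2 = -((t₀ - a)/2) by ring, Real.sin_neg]
      rw [this, hss]; ring
    have h1 : Real.sin ((a + t₀)/2) ≤ 1 := Real.sin_le_one _
    have h2 : Real.sin ((t₀ - a)/2) ≤ (t₀ - a)/2 := Real.sin_le (by linarith)
    have h3 : 0 ≤ Real.sin ((t₀ - a)/2) := by
      apply Real.sin_nonneg_of_nonneg_of_le_pi (by linarith)
      linarith
    have h4 : 0 ≤ Real.sin ((a + t₀)/2) := by
      apply Real.sin_nonneg_of_nonneg_of_le_pi (by linarith)
      linarith
    have e : Real.sin ((a + t₀)/2) * Real.sin ((t₀ - a)/2) ≤ 1 * ((t₀ - a)/2) :=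
      mul_le_mul h1 h2 h3 zero_le_one
    linarith
  -- sin t bounds
  have hsinle : Real.sin t ≤ x := by
    rw [← hs]
    exact Real.sin_le_sin_of_le_of_le_pi_div_two (by linarith) ht0u ht2
  have hsinge : x - Real.sin t ≤ ε := by
    have hkey : Real.sin t₀ - Real.sin t
        = 2 * Real.sin ((t₀ - t)/2) * Real.cos ((t₀ + t)/2) := Real.sin_sub_sin t₀ t
    have h2 : Real.sin ((t₀ - t)/2) ≤ (t₀ - t)/2 := Real.sin_le (by linarith)
    have h3 : 0 ≤ Real.sin ((t₀ - t)/2) := by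
      apply Real.sin_nonneg_of_nonneg_of_le_pi (by linarith)
      linarith
    have h5 : 0 ≤ (t₀ + t)/2 := by linarith
    have h6 : (t₀ + t)/2 ≤ t₀ := by linarith
    have h4 : Real.cos ((t₀ + t)/2) ≤ Real.cos t₀ + δ := by
      have h7 := coslip ((t₀ + t)/2) h5 h6
      linarith
    have h8 : 0 ≤ Real.cos ((t₀ + t)/2) := by
      apply Real.cos_nonneg_of_mem_Icc
      constructor <;> [linarith; linarith]
    have h9 : Real.sin t₀ - Real.sin t ≤ δ * (Real.cos t₀ + δ) := by
      have hδb : Real.sin ((t₀ - t)/2) ≤ δ/2 := by linarith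
      have hcd : 0 ≤ Real.cos t₀ + δ := by linarith
      have e : Real.sin ((t₀ - t)/2) * Real.cos ((t₀ + t)/2) ≤ (δ/2) * (Real.cos t₀ + δ) :=
        mul_le_mul hδb h4 h8 (by linarith)
      rw [hkey]; linarith
    have h10 : δ * (Real.cos t₀ + δ) ≤ δ * (2*r + r/4) :=
      mul_le_mul_of_nonneg_left (by linarith) hδ0.le
    have h11 : δ * (2*r + r/4) ≤ ε := by
      have : δ * (2*r + r/4) = (9/16) * ε * (r * 4^j) := by rw [hδdef]; ring
      rw [this, hr4]
      linarith
    rw [hs] at h9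
    linarith
  -- cos t bounds
  have hcosge : Real.cos t₀ ≤ Real.cos t := by
    apply Real.cos_le_cos_of_nonneg_of_le_pi htpos.le (by linarith) ht2
  have hcosle : Real.cos t ≤ Real.cos t₀ + δ := by
    have := coslip t htpos.le ht2
    linarith
  refine ⟨⟨htpos, htle⟩, ⟨by linarith, hsinge⟩, ⟨?_, ?_⟩⟩
  · -- 1 - 3r ≤ x - cos t
    have hct : Real.cos t ≤ 2*r + δ := by linarith
    have h2q : 2*q ≤ r/2 := by nlinarith
    linarith
  · linarith

noncomputable def cc (j : ℕ) : ℝ := ((4:ℝ)^j) ^ ((3:ℝ)⁻¹)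

lemma cc_nonneg (j : ℕ) : 0 ≤ cc j := Real.rpow_nonneg (by positivity) _

noncomputable def f1 (K : ℕ) : ℝ → ℝ :=
  fun y => ∑ j ∈ Finset.Icc 1 K, (Ij j).indicator (fun _ => cc j) y

noncomputable def f2 (K : ℕ) : ℝ → ℝ :=
  fun y => (Icc (0:ℝ) (((16:ℝ)^K)⁻¹)).indicator (fun _ => (16:ℝ)^K) y

lemma f1_meas (K : ℕ) : Measurable (f1 K) :=
  Finset.measurable_sum _ (fun j _ => measurable_const.indicator measurableSet_Icc)

lemma f2_meas (K : ℕ) : Measurable (f2 K) :=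
  measurable_const.indicator measurableSet_Icc

lemma f1_nonneg (K : ℕ) : ∀ y, 0 ≤ f1 K y := by
  intro y
  exact Finset.sum_nonneg fun j _ => Set.indicator_nonneg (fun _ _ => cc_nonneg j) y

lemma f2_nonneg (K : ℕ) : ∀ y, 0 ≤ f2 K y := by
  intro y
  exact Set.indicator_nonneg (fun _ _ => by positivity) y

lemma f1_ge {K j : ℕ} (hj : j ∈ Finset.Icc 1 K) {y : ℝ} (hy : y ∈ Ij j) :
    cc j ≤ f1 K y := by
  have h := Finset.single_le_sum
    (f := fun i => (Ij i).indicator (fun _ => cc i) y)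
    (fun i _ => Set.indicator_nonneg (fun _ _ => cc_nonneg i) y) hj
  simpa [f1, Set.indicator_of_mem hy] using h

lemma T2_lower {K j : ℕ} (hj1 : 1 ≤ j) (hjK : j ≤ K) {x : ℝ} (hx : x ∈ Ej j) :
    ENNReal.ofReal ((2*Real.pi)⁻¹ * (cc j * ((4:ℝ)^j/4))) ≤ T2 (f1 K) (f2 K) x := by
  have hε0 : (0:ℝ) < ((16:ℝ)^K)⁻¹ := by positivity
  have hδ0 : (0:ℝ) < ((16:ℝ)^K)⁻¹ * (4:ℝ)^j / 4 := by positivity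
  set ε : ℝ := ((16:ℝ)^K)⁻¹ with hεdef
  set δ : ℝ := ε * (4:ℝ)^j / 4 with hδdef
  set t₀ : ℝ := Real.arcsin x with ht0def
  have hsub : Ioc (t₀ - δ) t₀ ⊆ Ioc 0 (2*Real.pi) :=
    fun t ht => (geom hj1 hjK hx ht).1
  have hptwise : ∀ t ∈ Ioc (t₀ - δ) t₀,
      ENNReal.ofReal (cc j) * ENNReal.ofReal ((16:ℝ)^K) ≤
      ENNReal.ofReal (f1 K (x - Real.cos t)) * ENNReal.ofReal (f2 K (x - Real.sin t)) := by
    intro t ht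
    obtain ⟨-, h2, h3⟩ := geom hj1 hjK hx ht
    have e1 : cc j ≤ f1 K (x - Real.cos t) :=
      f1_ge (by simp [Finset.mem_Icc, hj1, hjK]) h3
    have e2 : f2 K (x - Real.sin t) = (16:ℝ)^K := Set.indicator_of_mem h2 _
    rw [e2]
    exact mul_le_mul' (ENNReal.ofReal_le_ofReal e1) le_rfl
  have hint : ENNReal.ofReal (cc j) * ENNReal.ofReal ((16:ℝ)^K) * ENNReal.ofReal δ ≤
      ∫⁻ t in Ioc 0 (2*Real.pi),
        ENNReal.ofReal (f1 K (x - Real.cos t)) * ENNReal.ofReal (f2 K (x - Real.sin t)) := by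
    calc ENNReal.ofReal (cc j) * ENNReal.ofReal ((16:ℝ)^K) * ENNReal.ofReal δ
        = (ENNReal.ofReal (cc j) * ENNReal.ofReal ((16:ℝ)^K)) * volume (Ioc (t₀ - δ) t₀) := by
          rw [Real.volume_Ioc]
          congr 2
          ring
    _ = ∫⁻ _ in Ioc (t₀ - δ) t₀, ENNReal.ofReal (cc j) * ENNReal.ofReal ((16:ℝ)^K) :=
          (setLIntegral_const _ _).symm
    _ ≤ ∫⁻ t in Ioc (t₀ - δ) t₀,
          ENNReal.ofReal (f1 K (x - Real.cos t)) * ENNReal.ofReal (f2 K (x - Real.sin t)) :=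
          setLIntegral_mono' measurableSet_Ioc hptwise
    _ ≤ _ := lintegral_mono_set hsub
  have hπ : (0:ℝ) < 2*Real.pi := by positivity
  calc ENNReal.ofReal ((2*Real.pi)⁻¹ * (cc j * ((4:ℝ)^j/4)))
      = (ENNReal.ofReal (2*Real.pi))⁻¹ *
        (ENNReal.ofReal (cc j) * ENNReal.ofReal ((16:ℝ)^K) * ENNReal.ofReal δ) := by
        have hre : (2*Real.pi)⁻¹ * (cc j * ((4:ℝ)^j/4))
            = (2*Real.pi)⁻¹ * (cc j * (16:ℝ)^K * δ) := by
          rw [hδdef, hεdef]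
          field_simp
        rw [hre, ENNReal.ofReal_mul (by positivity : (0:ℝ) ≤ (2*Real.pi)⁻¹),
          ENNReal.ofReal_mul (mul_nonneg (cc_nonneg j) (by positivity)),
          ENNReal.ofReal_mul (cc_nonneg j),
          ENNReal.ofReal_inv_of_pos hπ]
  _ ≤ T2 (f1 K) (f2 K) x := by
        rw [T2]
        exact mul_le_mul_right hint _

lemma Ij_unique {i j : ℕ} (hne : i ≠ j) {y : ℝ} (hy : y ∈ Ij j) : y ∉ Ij i := by
  rcases lt_or_gt_of_ne hne with h | h
  · intro hyi
    exact Ij_disj i j h y hyi hy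
  · exact Ij_disj j i h y hy

lemma lp1_f2 (K : ℕ) : lpNorm 1 (fun x => ENNReal.ofReal (f2 K x)) = 1 := by
  rw [_root_.lpNorm, if_neg one_ne_top]
  have hcongr : ∀ x : ℝ, ENNReal.ofReal (f2 K x) ^ (1:ℝ≥0∞).toReal
      = (Icc (0:ℝ) (((16:ℝ)^K)⁻¹)).indicator (fun _ => ENNReal.ofReal ((16:ℝ)^K)) x := by
    intro x
    rw [ENNReal.toReal_one, ENNReal.rpow_one]
    unfold f2
    by_cases h : x ∈ Icc (0:ℝ) (((16:ℝ)^K)⁻¹) <;> simp [h]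
  rw [lintegral_congr hcongr, lintegral_indicator_const measurableSet_Icc,
    Real.volume_Icc]
  have h16 : (0:ℝ) < 16^K := by positivity
  rw [show ((16:ℝ)^K)⁻¹ - 0 = ((16:ℝ)^K)⁻¹ by ring,
    ← ENNReal.ofReal_mul (by positivity), mul_inv_cancel₀ h16.ne', ENNReal.ofReal_one]
  simp

lemma cube_eq (K : ℕ) (y : ℝ) :
    ENNReal.ofReal (f1 K y) ^ (3:ℝ)
      = ∑ j ∈ Finset.Icc 1 K, (Ij j).indicator (fun _ => ENNReal.ofReal ((4:ℝ)^j)) y := by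
  by_cases hy : ∃ j ∈ Finset.Icc 1 K, y ∈ Ij j
  · obtain ⟨j, hj, hyj⟩ := hy
    have hval : f1 K y = cc j := by
      unfold f1
      rw [Finset.sum_eq_single_of_mem j hj]
      · exact Set.indicator_of_mem hyj _
      · intro i _ hne
        exact Set.indicator_of_notMem (Ij_unique hne hyj) _
    have hsum : ∑ i ∈ Finset.Icc 1 K, (Ij i).indicator (fun _ => ENNReal.ofReal ((4:ℝ)^i)) y
        = ENNReal.ofReal ((4:ℝ)^j) := by
      rw [Finset.sum_eq_single_of_mem j hj]
      · exact Set.indicator_of_mem hyj _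
      · intro i _ hne
        exact Set.indicator_of_notMem (Ij_unique hne hyj) _
    rw [hval, hsum, ENNReal.ofReal_rpow_of_nonneg (cc_nonneg j) (by norm_num)]
    congr 1
    unfold cc
    rw [← Real.rpow_mul (by positivity : (0:ℝ) ≤ (4:ℝ)^j)]
    norm_num
  · push_neg at hy
    have hval : f1 K y = 0 :=
      Finset.sum_eq_zero fun i hi => Set.indicator_of_notMem (hy i hi) _
    rw [hval, ENNReal.ofReal_zero, ENNReal.zero_rpow_of_pos (by norm_num)]
    exact (Finset.sum_eq_zero fun i hi => Set.indicator_of_notMem (hy i hi) _).symm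

lemma lp3_f1 (K : ℕ) :
    lpNorm 3 (fun x => ENNReal.ofReal (f1 K x))
      = ((K:ℝ≥0∞) * ENNReal.ofReal 2) ^ ((1:ℝ)/3) := by
  rw [_root_.lpNorm, if_neg (by norm_num : (3:ℝ≥0∞) ≠ ∞)]
  have ht : (3:ℝ≥0∞).toReal = (3:ℝ) := by norm_num
  rw [ht]
  have hcongr : ∀ x : ℝ, ENNReal.ofReal (f1 K x) ^ (3:ℝ)
      = ∑ j ∈ Finset.Icc 1 K, (Ij j).indicator (fun _ => ENNReal.ofReal ((4:ℝ)^j)) x :=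
    cube_eq K
  have hmeas : ∀ j ∈ Finset.Icc 1 K,
      Measurable fun x : ℝ => (Ij j).indicator (fun _ => ENNReal.ofReal ((4:ℝ)^j)) x :=
    fun j _ => measurable_const.indicator (by rw [Ij]; exact measurableSet_Icc)
  rw [lintegral_congr hcongr, lintegral_finset_sum _ hmeas]
  have hterm : ∀ j ∈ Finset.Icc 1 K,
      (∫⁻ x, (Ij j).indicator (fun _ => ENNReal.ofReal ((4:ℝ)^j)) x) = ENNReal.ofReal 2 := by
    intro j _
    simp only [Ij]
    rw [lintegral_indicator_const measurableSet_Icc, Real.volume_Icc]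
    have h4 : (0:ℝ) < 4^j := by positivity
    rw [show 1 - ((4:ℝ)^j)⁻¹ - (1 - 3*((4:ℝ)^j)⁻¹) = 2 * ((4:ℝ)^j)⁻¹ by ring,
      ← ENNReal.ofReal_mul (by positivity)]
    congr 1
    field_simp
  rw [Finset.sum_congr rfl hterm, Finset.sum_const, Nat.card_Icc, nsmul_eq_mul]
  simp

noncomputable def a0 : ℝ := ((8*Real.pi)⁻¹) ^ ((3:ℝ)/2)

lemma a0_pos : 0 < a0 := Real.rpow_pos_of_pos (by positivity) _

lemma bj_pow (j : ℕ) :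
    ((2*Real.pi)⁻¹ * (cc j * ((4:ℝ)^j/4))) ^ ((3:ℝ)/2) * ((16:ℝ)^j)⁻¹ = a0 := by
  have h4 : (0:ℝ) < 4^j := by positivity
  have h1 : cc j * ((4:ℝ)^j) = ((4:ℝ)^j) ^ ((4:ℝ)/3) := by
    rw [show ((4:ℝ)/3) = (3:ℝ)⁻¹ + 1 by norm_num, Real.rpow_add h4, Real.rpow_one, cc]
  have h2 : (2*Real.pi)⁻¹ * (cc j * ((4:ℝ)^j/4))
      = (8*Real.pi)⁻¹ * (((4:ℝ)^j) ^ ((4:ℝ)/3)) := by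
    rw [← h1]
    field_simp
    all_goals first | ring1 | (left; first | trivial | ring1)
  rw [h2, Real.mul_rpow (by positivity) (Real.rpow_nonneg h4.le _),
    ← Real.rpow_mul h4.le]
  have h3 : ((4:ℝ)^j) ^ ((4:ℝ)/3 * ((3:ℝ)/2)) = (16:ℝ)^j := by
    rw [show ((4:ℝ)/3 * ((3:ℝ)/2)) = ((2:ℕ):ℝ) by norm_num, Real.rpow_natCast,
      ← pow_mul, mul_comm j 2, pow_mul]
    norm_num
  rw [h3, a0]
  have h16 : (0:ℝ) < 16^j := by positivity
  field_simp

lemma Ej_meas (j : ℕ) : MeasurableSet (Ej j) := by rw [Ej]; exact measurableSet_Icc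

lemma Ej_pairwise (K : ℕ) : Set.PairwiseDisjoint ↑(Finset.Icc 1 K) Ej := by
  intro i _ j _ hne
  rcases lt_or_gt_of_ne hne with h | h
  · exact Set.disjoint_left.mpr fun y hyi hyj => Ej_disj i j h y hyi hyj
  · exact Set.disjoint_left.mpr fun y hyi hyj => Ej_disj j i h y hyj hyi

lemma bj_nonneg (j : ℕ) : 0 ≤ (2*Real.pi)⁻¹ * (cc j * ((4:ℝ)^j/4)) :=
  mul_nonneg (by positivity) (mul_nonneg (cc_nonneg j) (by positivity))

lemma lp32_lower (K : ℕ) :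
    ENNReal.ofReal ((K:ℝ) * a0) ^ ((2:ℝ)/3) ≤ lpNorm (3/2) (T2 (f1 K) (f2 K)) := by
  have htop : (3/2 : ℝ≥0∞) ≠ ∞ := (ENNReal.div_lt_top (by norm_num) (by norm_num)).ne
  rw [_root_.lpNorm, if_neg htop]
  have ht : ((3:ℝ≥0∞)/2).toReal = (3:ℝ)/2 := by
    rw [ENNReal.toReal_div]
    norm_num
  rw [ht, show (1:ℝ)/((3:ℝ)/2) = (2:ℝ)/3 by norm_num]
  apply ENNReal.rpow_le_rpow _ (by norm_num)
  calc ENNReal.ofReal ((K:ℝ) * a0)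
      = ∑ _j ∈ Finset.Icc 1 K, ENNReal.ofReal a0 := by
        rw [Finset.sum_const, Nat.card_Icc, nsmul_eq_mul,
          ENNReal.ofReal_mul (Nat.cast_nonneg K), ENNReal.ofReal_natCast]
        simp
  _ ≤ ∑ j ∈ Finset.Icc 1 K, ∫⁻ x in Ej j, T2 (f1 K) (f2 K) x ^ ((3:ℝ)/2) := by
        apply Finset.sum_le_sum
        intro j hj
        obtain ⟨hj1, hjK⟩ := Finset.mem_Icc.mp hj
        have hEvol : volume (Ej j) = ENNReal.ofReal (((16:ℝ)^j)⁻¹) := by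
          rw [Ej, Real.volume_Icc]
          congr 1
          ring
        calc ENNReal.ofReal a0
            = ENNReal.ofReal ((((2*Real.pi)⁻¹ * (cc j * ((4:ℝ)^j/4))) ^ ((3:ℝ)/2))
                * ((16:ℝ)^j)⁻¹) := by rw [bj_pow j]
          _ = ENNReal.ofReal (((2*Real.pi)⁻¹ * (cc j * ((4:ℝ)^j/4))) ^ ((3:ℝ)/2))
                * ENNReal.ofReal (((16:ℝ)^j)⁻¹) :=
              ENNReal.ofReal_mul (Real.rpow_nonneg (bj_nonneg j) _)
          _ = ENNReal.ofReal ((2*Real.pi)⁻¹ * (cc j * ((4:ℝ)^j/4))) ^ ((3:ℝ)/2)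
                * volume (Ej j) := by
              rw [ENNReal.ofReal_rpow_of_nonneg (bj_nonneg j) (by norm_num), hEvol]
          _ = ∫⁻ _ in Ej j,
                ENNReal.ofReal ((2*Real.pi)⁻¹ * (cc j * ((4:ℝ)^j/4))) ^ ((3:ℝ)/2) :=
              (setLIntegral_const _ _).symm
          _ ≤ ∫⁻ x in Ej j, T2 (f1 K) (f2 K) x ^ ((3:ℝ)/2) :=
              setLIntegral_mono' (Ej_meas j)
                (fun x hx => ENNReal.rpow_le_rpow (T2_lower hj1 hjK hx) (by norm_num))
  _ = ∫⁻ x in ⋃ j ∈ Finset.Icc 1 K, Ej j, T2 (f1 K) (f2 K) x ^ ((3:ℝ)/2) :=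
        (lintegral_biUnion_finset (Ej_pairwise K) (fun j _ => Ej_meas j) _).symm
  _ ≤ ∫⁻ x, T2 (f1 K) (f2 K) x ^ ((3:ℝ)/2) := setLIntegral_le_lintegral _ _

end NST

open NST

theorem not_strong_type_at_G :
    ¬ ∃ C : ℝ, 0 < C ∧ ∀ f₁ f₂ : ℝ → ℝ, Measurable f₁ → Measurable f₂ →
      (∀ x, 0 ≤ f₁ x) → (∀ x, 0 ≤ f₂ x) →
      lpNorm (3 / 2) (T2 f₁ f₂) ≤ ENNReal.ofReal C *
        lpNorm 3 (fun x => ENNReal.ofReal (f₁ x)) *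
        lpNorm 1 (fun x => ENNReal.ofReal (f₂ x)) := by
  rintro ⟨C, hC, h⟩
  have key : ∀ K : ℕ, (((K:ℝ) * a0) ^ ((2:ℝ)/3)) ≤ C * (((K:ℝ) * 2) ^ ((1:ℝ)/3)) := by
    intro K
    have h1 := h (f1 K) (f2 K) (f1_meas K) (f2_meas K) (f1_nonneg K) (f2_nonneg K)
    rw [lp3_f1, lp1_f2, mul_one] at h1
    have h2 := le_trans (lp32_lower K) h1
    have hR : ENNReal.ofReal C * ((K:ℝ≥0∞) * ENNReal.ofReal 2) ^ ((1:ℝ)/3)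
        = ENNReal.ofReal (C * ((K:ℝ)*2) ^ ((1:ℝ)/3)) := by
      rw [← ENNReal.ofReal_natCast, ← ENNReal.ofReal_mul (Nat.cast_nonneg K),
        ENNReal.ofReal_rpow_of_nonneg (by positivity) (by norm_num),
        ← ENNReal.ofReal_mul hC.le]
    rw [hR] at h2
    have hL : ENNReal.ofReal ((K:ℝ) * a0) ^ ((2:ℝ)/3)
        = ENNReal.ofReal (((K:ℝ)*a0) ^ ((2:ℝ)/3)) :=
      ENNReal.ofReal_rpow_of_nonneg (mul_nonneg (Nat.cast_nonneg K) a0_pos.le) (by norm_num)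
    rw [hL] at h2
    exact (ENNReal.ofReal_le_ofReal_iff (by positivity)).mp h2
  set D : ℝ := C * (2:ℝ) ^ ((1:ℝ)/3) / a0 ^ ((2:ℝ)/3) with hD
  have hDpos : 0 < D :=
    div_pos (mul_pos hC (Real.rpow_pos_of_pos (by norm_num) _))
      (Real.rpow_pos_of_pos a0_pos _)
  set K : ℕ := Nat.floor (D^3) + 1 with hKdef
  have hKgt : (D^3 : ℝ) < (K:ℝ) := by
    rw [hKdef]
    push_cast
    exact Nat.lt_floor_add_one _
  have hKpos : (0:ℝ) < (K:ℝ) := lt_of_le_of_lt (by positivity) hKgt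
  have hk := key K
  have e1 : ((K:ℝ) * a0) ^ ((2:ℝ)/3) = (K:ℝ)^((2:ℝ)/3) * a0^((2:ℝ)/3) :=
    Real.mul_rpow hKpos.le a0_pos.le
  have e2 : ((K:ℝ) * 2) ^ ((1:ℝ)/3) = (K:ℝ)^((1:ℝ)/3) * 2^((1:ℝ)/3) :=
    Real.mul_rpow hKpos.le (by norm_num)
  have e3 : (K:ℝ)^((2:ℝ)/3) = (K:ℝ)^((1:ℝ)/3) * (K:ℝ)^((1:ℝ)/3) := by
    rw [← Real.rpow_add hKpos]
    norm_num
  have hK13 : 0 < (K:ℝ)^((1:ℝ)/3) := Real.rpow_pos_of_pos hKpos _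
  have step : (K:ℝ)^((1:ℝ)/3) ≤ D := by
    rw [e1, e3, e2] at hk
    rw [hD, le_div_iff₀ (Real.rpow_pos_of_pos a0_pos _)]
    have hk' : ((K:ℝ)^((1:ℝ)/3) * a0^((2:ℝ)/3)) * (K:ℝ)^((1:ℝ)/3)
        ≤ (C * (2:ℝ)^((1:ℝ)/3)) * (K:ℝ)^((1:ℝ)/3) := by nlinarith [hk]
    exact le_of_mul_le_mul_right hk' hK13
  have hfin : (K:ℝ) ≤ D^3 := by
    have h3 : ((K:ℝ)^((1:ℝ)/3))^(3:ℕ) ≤ D^(3:ℕ) := pow_le_pow_left₀ hK13.le step 3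
    rwa [← Real.rpow_natCast ((K:ℝ)^((1:ℝ)/3)) 3, ← Real.rpow_mul hKpos.le,
      show ((1:ℝ)/3 * ((3:ℕ):ℝ)) = (1:ℝ) by norm_num, Real.rpow_one] at h3
  linarith
end

section
/- Let θ ∈ (0,1) and define exponents p₁, p₂ by 1/p₁ = θ/3 and 1/p₂ = θ/3 + (1−θ)/2 (so that (1/p₁, 1/p₂; 0) lies on the open line segment joining B = (1/3, 1/3; 0) and E = (0, 1/2; 0)). Then there is no finite constant C > 0 such that ‖T(f₁,f₂)‖_∞ ≤ C ‖f₁‖_{p₁} ‖f₂‖_{p₂} holds for all nonnegative measurable functions f₁, f₂ on ℝ. -/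
open MeasureTheory ENNReal

/-- monotonicity of set lintegral under a pointwise bound on the set -/
lemma setlint_mono_on {s : Set ℝ} (hs : MeasurableSet s) {f g : ℝ → ℝ≥0∞}
    (h : ∀ x ∈ s, f x ≤ g x) : ∫⁻ x in s, f x ≤ ∫⁻ x in s, g x :=
  lintegral_mono_ae ((ae_restrict_mem hs).mono h)

/-- lower bound for essSup from a bound on a set of positive measure -/
lemma le_essSup_vol {g : ℝ → ℝ≥0∞} {s : Set ℝ} (hs : volume s ≠ 0) {c : ℝ≥0∞}
    (h : ∀ x ∈ s, c ≤ g x) : c ≤ essSup g (volume : Measure ℝ) := by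
  by_contra hc
  push_neg at hc
  have hae := ae_le_essSup (μ := (volume : Measure ℝ)) g
  rw [Filter.eventually_iff, mem_ae_iff] at hae
  apply hs
  apply measure_mono_null _ hae
  intro x hx
  simp only [Set.mem_compl_iff, Set.mem_setOf_eq]
  intro hle
  exact absurd (le_trans (h x hx) hle) (not_le.mpr hc)

/-- key upper bound for the Lᵖ-norm-type integrals of the counterexample functions -/
lemma lint_step (r : ℝ) (hr : 1/4 ≤ r) (hr1 : r ≤ 1) (N : ℕ) :
    ∫⁻ y : ℝ, ENNReal.ofReal (if |y| ≤ 1/2 then (max |y| (r ^ N))⁻¹ else 0)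
      ≤ ENNReal.ofReal (1 + 8 * N) := by
  have hr0 : (0:ℝ) < r := lt_of_lt_of_le (by norm_num) hr
  induction N with
  | zero =>
      have hb : ∀ y : ℝ, ENNReal.ofReal (if |y| ≤ 1/2 then (max |y| (r ^ 0))⁻¹ else 0)
          ≤ (Set.Icc (-(1:ℝ)/2) (1/2)).indicator (fun _ => (1:ℝ≥0∞)) y := by
        intro y
        by_cases hy : |y| ≤ 1/2
        · have hy' : y ∈ Set.Icc (-(1:ℝ)/2) (1/2) := by
            rcases abs_le.mp hy with ⟨h1, h2⟩
            constructor <;> linarith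
          rw [if_pos hy, Set.indicator_of_mem hy', pow_zero]
          have h1 : (max |y| 1)⁻¹ ≤ 1 := by
            rw [max_eq_right (le_trans hy (by norm_num))]
            norm_num
          exact ENNReal.ofReal_le_one.mpr h1
        · rw [if_neg hy]
          simp
      calc ∫⁻ y : ℝ, ENNReal.ofReal (if |y| ≤ 1/2 then (max |y| (r ^ 0))⁻¹ else 0)
          ≤ ∫⁻ y, (Set.Icc (-(1:ℝ)/2) (1/2)).indicator (fun _ => (1:ℝ≥0∞)) y :=
            lintegral_mono hb
        _ = 1 * volume (Set.Icc (-(1:ℝ)/2) (1/2)) :=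
            lintegral_indicator_const measurableSet_Icc 1
        _ ≤ ENNReal.ofReal (1 + 8 * (0:ℕ)) := by
            rw [one_mul, Real.volume_Icc]
            apply ENNReal.ofReal_le_ofReal
            norm_num
  | succ n ih =>
      have hrn : (0:ℝ) < r ^ n := pow_pos hr0 n
      have hrn1 : (0:ℝ) < r ^ (n+1) := pow_pos hr0 (n+1)
      have hb : ∀ y : ℝ, ENNReal.ofReal (if |y| ≤ 1/2 then (max |y| (r ^ (n+1)))⁻¹ else 0)
          ≤ (Set.Icc (-(r^n)) (r^n)).indicator (fun _ => ENNReal.ofReal ((r^(n+1))⁻¹)) y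
            + ENNReal.ofReal (if |y| ≤ 1/2 then (max |y| (r ^ n))⁻¹ else 0) := by
        intro y
        by_cases hy : |y| ≤ 1/2
        · by_cases h2 : |y| < r ^ n
          · have hy' : y ∈ Set.Icc (-(r^n)) (r^n) := by
              rcases abs_le.mp h2.le with ⟨ha, hb'⟩
              exact ⟨ha, hb'⟩
            rw [Set.indicator_of_mem hy', if_pos hy]
            refine le_add_right (ENNReal.ofReal_le_ofReal ?_)
            exact inv_anti₀ hrn1 (le_max_right _ _)
          · push_neg at h2
            have h3 : r ^ (n+1) ≤ |y| :=
              le_trans (pow_le_pow_of_le_one hr0.le hr1 (Nat.le_succ n)) h2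
            rw [if_pos hy, if_pos hy, max_eq_left h3, max_eq_left h2]
            exact le_add_self
        · rw [if_neg hy]
          simp
      calc ∫⁻ y : ℝ, ENNReal.ofReal (if |y| ≤ 1/2 then (max |y| (r ^ (n+1)))⁻¹ else 0)
          ≤ ∫⁻ y, ((Set.Icc (-(r^n)) (r^n)).indicator (fun _ => ENNReal.ofReal ((r^(n+1))⁻¹)) y
              + ENNReal.ofReal (if |y| ≤ 1/2 then (max |y| (r ^ n))⁻¹ else 0)) :=
            lintegral_mono hb
        _ = (∫⁻ y, (Set.Icc (-(r^n)) (r^n)).indicator (fun _ => ENNReal.ofReal ((r^(n+1))⁻¹)) y)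
              + ∫⁻ y, ENNReal.ofReal (if |y| ≤ 1/2 then (max |y| (r ^ n))⁻¹ else 0) :=
            lintegral_add_left (measurable_const.indicator measurableSet_Icc) _
        _ ≤ ENNReal.ofReal 8 + ENNReal.ofReal (1 + 8 * n) := by
            refine add_le_add ?_ ih
            rw [lintegral_indicator_const measurableSet_Icc, Real.volume_Icc]
            rw [← ENNReal.ofReal_mul (by positivity)]
            apply ENNReal.ofReal_le_ofReal
            have heq : (r^(n+1))⁻¹ * (r^n - -(r^n)) = 2 / r := by
              rw [pow_succ]
              field_simp
              ring
            rw [heq, div_le_iff₀ hr0]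
            linarith
        _ ≤ ENNReal.ofReal (1 + 8 * (n+1:ℕ)) := by
            rw [← ENNReal.ofReal_add (by norm_num) (by positivity)]
            apply ENNReal.ofReal_le_ofReal
            push_cast
            linarith

/-- lower bound for the dyadic sum giving the logarithmic divergence -/
lemma lint_low (m : ℕ) :
    ENNReal.ofReal (m / 4) ≤
      ∫⁻ s in Set.Ioc ((1/2:ℝ) ^ (m + 3)) (1/8), ENNReal.ofReal ((2 * s)⁻¹) := by
  induction m with
  | zero => simp
  | succ n ih =>
      have hab : ((1/2:ℝ)) ^ (n+4) ≤ (1/2:ℝ) ^ (n+3) :=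
        pow_le_pow_of_le_one (by norm_num) (by norm_num) (by omega)
      have hbc : ((1/2:ℝ)) ^ (n+3) ≤ 1/8 := by
        calc ((1/2:ℝ)) ^ (n+3) ≤ (1/2:ℝ) ^ 3 :=
              pow_le_pow_of_le_one (by norm_num) (by norm_num) (by omega)
          _ = 1/8 := by norm_num
      have hsplit : Set.Ioc ((1/2:ℝ) ^ (n+4)) (1/8)
          = Set.Ioc ((1/2:ℝ) ^ (n+4)) ((1/2:ℝ)^(n+3)) ∪ Set.Ioc ((1/2:ℝ)^(n+3)) (1/8) :=
        (Set.Ioc_union_Ioc_eq_Ioc hab hbc).symm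
      have hpos3 : (0:ℝ) < (1/2:ℝ) ^ (n+3) := by positivity
      have hpos4 : (0:ℝ) < (1/2:ℝ) ^ (n+4) := by positivity
      have h1 : ENNReal.ofReal (1/4) ≤
          ∫⁻ s in Set.Ioc ((1/2:ℝ) ^ (n+4)) ((1/2:ℝ)^(n+3)), ENNReal.ofReal ((2 * s)⁻¹) := by
        have hconst : ENNReal.ofReal (1/4)
            = ENNReal.ofReal ((2 * (1/2:ℝ)^(n+3))⁻¹) * volume (Set.Ioc ((1/2:ℝ) ^ (n+4)) ((1/2:ℝ)^(n+3))) := by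
          rw [Real.volume_Ioc, ← ENNReal.ofReal_mul (by positivity)]
          congr 1
          have h4 : (1/2:ℝ) ^ (n+4) = (1/2:ℝ)^(n+3) * (1/2) := pow_succ _ _
          rw [h4]
          field_simp
          ring
        rw [hconst, ← setLIntegral_const]
        apply setlint_mono_on measurableSet_Ioc
        intro s hs
        apply ENNReal.ofReal_le_ofReal
        apply inv_anti₀ (by nlinarith [hs.1])
        nlinarith [hs.2]
      calc ENNReal.ofReal ((n+1:ℕ) / 4)
          ≤ ENNReal.ofReal (1/4) + ENNReal.ofReal ((n:ℕ) / 4) := by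
            rw [← ENNReal.ofReal_add (by norm_num) (by positivity)]
            apply ENNReal.ofReal_le_ofReal
            push_cast
            linarith
        _ ≤ (∫⁻ s in Set.Ioc ((1/2:ℝ) ^ (n+4)) ((1/2:ℝ)^(n+3)), ENNReal.ofReal ((2 * s)⁻¹))
              + ∫⁻ s in Set.Ioc ((1/2:ℝ)^(n+3)) (1/8), ENNReal.ofReal ((2 * s)⁻¹) :=
            add_le_add h1 ih
        _ = ∫⁻ s in Set.Ioc ((1/2:ℝ) ^ (n+1+3)) (1/8), ENNReal.ofReal ((2 * s)⁻¹) := by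
            rw [show n+1+3 = n+4 by omega, hsplit,
              lintegral_union measurableSet_Ioc (Set.Ioc_disjoint_Ioc_of_le le_rfl)]

/-- translation invariance of set-lintegral over a shifted interval -/
lemma lint_shift (g : ℝ → ℝ≥0∞) (c a b : ℝ) :
    ∫⁻ t in Set.Ioc (c + a) (c + b), g (t - c) = ∫⁻ s in Set.Ioc a b, g s := by
  rw [← lintegral_indicator measurableSet_Ioc, ← lintegral_indicator measurableSet_Ioc]
  have h : ∀ t : ℝ, (Set.Ioc (c+a) (c+b)).indicator (fun t => g (t - c)) t
      = (Set.Ioc a b).indicator g (t + (-c)) := by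
    intro t
    simp only [Set.indicator_apply, Set.mem_Ioc, sub_eq_add_neg]
    have : (c + a < t ∧ t ≤ c + b) ↔ (a < t + -c ∧ t + -c ≤ b) := by
      constructor <;> rintro ⟨h1, h2⟩ <;> constructor <;> linarith
    exact if_congr this rfl rfl
  simp_rw [h]
  exact lintegral_add_right_eq_self (fun s => (Set.Ioc a b).indicator g s) (-c)

set_option maxHeartbeats 1000000 in
/-- the key pointwise analytic estimate, in purely real form -/
lemma key_real (u v δ₁ δ₂ a x s : ℝ)
    (hu0 : 0 < u) (hv0 : 0 < v) (hu1 : u < 1) (huv : u + 2 * v = 1)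
    (hδ₁pos : 0 < δ₁) (hδ₂pos : 0 < δ₂)
    (haδ₁ : a = δ₁) (hδ₁sq : δ₁ ^ 2 = δ₂) (hδ₂₁ : δ₂ ≤ δ₁)
    (ha8 : a ≤ 1/8) (hsa : a < s) (hs8 : s ≤ 1/8)
    (hxabs : |x| ≤ δ₂ / 4) :
    (2*s)⁻¹ ≤ (if |x + Real.sin s| ≤ 1/2 then (max |x + Real.sin s| δ₁) ^ (-u) else 0)
      * (if |x - Real.cos s + 1| ≤ 1/2 then (max |x - Real.cos s + 1| δ₂) ^ (-v) else 0) := by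
  have ha0 : 0 < a := haδ₁ ▸ hδ₁pos
  have hs0 : 0 < s := lt_trans ha0 hsa
  have hss : s * s ≤ 1/64 := by nlinarith
  have hsq : s^2 ≤ 1/64 := by nlinarith
  have hcube : s^3 ≤ s/64 := by nlinarith [mul_le_mul_of_nonneg_right hss hs0.le]
  have hs4 : s^4 ≤ s^2/64 := by nlinarith [mul_le_mul_of_nonneg_right hsq (sq_nonneg s)]
  have hs4nn : 0 ≤ s^4 := by positivity
  -- sine bounds
  have hsin_lt : Real.sin s < s := Real.sin_lt hs0
  have hsin_gt : s - s^3/4 < Real.sin s := by have := Real.sin_gt_sub_cube hs0; linarith [pow_pos hs0 3]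
  have hsin_low : s/2 ≤ Real.sin s := by linarith
  -- cosine bounds
  have hcosb := Real.cos_bound (x := s) (by rw [abs_of_pos hs0]; linarith)
  rw [abs_of_pos hs0] at hcosb
  obtain ⟨hc1, hc2⟩ := abs_le.mp hcosb
  have hcos_low : s^2/3 ≤ 1 - Real.cos s := by linarith
  have hcos_up : 1 - Real.cos s ≤ 3/4 * s^2 := by linarith
  -- x is tiny
  have hδ₂s : δ₂ < s^2 := by
    have h : a^2 < s^2 := by nlinarith
    rw [← hδ₁sq, ← haδ₁]
    exact h
  have hx1 : -(δ₂/4) ≤ x := (abs_le.mp hxabs).1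
  have hx2 : x ≤ δ₂/4 := (abs_le.mp hxabs).2
  have hδ₂a : δ₂ ≤ a := haδ₁ ▸ hδ₂₁
  -- first factor
  have hy₁low : s/4 ≤ x + Real.sin s := by linarith
  have hy₁up : x + Real.sin s ≤ 2 * s := by linarith
  have hy₁abs : |x + Real.sin s| ≤ 1/2 := by
    rw [abs_of_pos (by linarith)]
    linarith
  have hmax₁pos : (0:ℝ) < max |x + Real.sin s| δ₁ :=
    lt_of_lt_of_le hδ₁pos (le_max_right _ _)
  have hf₁low : (2*s) ^ (-u) ≤ (max |x + Real.sin s| δ₁) ^ (-u) := by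
    apply Real.rpow_le_rpow_of_nonpos hmax₁pos _ (by linarith)
    apply max_le
    · rw [abs_of_pos (by linarith)]; linarith
    · rw [← haδ₁]; linarith
  -- second factor
  have hz_low : s^2/12 ≤ x - Real.cos s + 1 := by linarith
  have hz_up : x - Real.cos s + 1 ≤ s^2 := by linarith
  have hz_pos : 0 < x - Real.cos s + 1 := by
    have := pow_pos hs0 2
    linarith
  have hz_abs : |x - Real.cos s + 1| ≤ 1/2 := by
    rw [abs_of_pos hz_pos]
    linarith
  have hmax₂pos : (0:ℝ) < max |x - Real.cos s + 1| δ₂ :=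
    lt_of_lt_of_le hδ₂pos (le_max_right _ _)
  have hf₂low : (s^2) ^ (-v) ≤ (max |x - Real.cos s + 1| δ₂) ^ (-v) := by
    apply Real.rpow_le_rpow_of_nonpos hmax₂pos _ (by linarith)
    apply max_le
    · rw [abs_of_pos hz_pos]; linarith
    · linarith
  -- combine
  have hprod : (2*s)⁻¹ ≤ (2*s) ^ (-u) * (s^2) ^ (-v) := by
    have h1 : ((s:ℝ)^2) ^ (-v) = s ^ (-(2*v)) := by
      rw [← Real.rpow_natCast s 2, ← Real.rpow_mul hs0.le]
      norm_num
    have h2 : (2*s) ^ (-u) = (2:ℝ) ^ (-u) * s ^ (-u) :=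
      Real.mul_rpow (by norm_num) hs0.le
    have h3 : s ^ (-u) * s ^ (-(2*v)) = s⁻¹ := by
      rw [← Real.rpow_add hs0, show -u + -(2*v) = -1 by linarith, Real.rpow_neg_one]
    have h4 : (2:ℝ)⁻¹ ≤ (2:ℝ) ^ (-u) := by
      rw [← Real.rpow_neg_one]
      exact Real.rpow_le_rpow_of_exponent_le one_le_two (by linarith)
    calc (2*s)⁻¹ = 2⁻¹ * s⁻¹ := by rw [mul_inv]
      _ ≤ (2:ℝ) ^ (-u) * s⁻¹ :=
          mul_le_mul_of_nonneg_right h4 (inv_nonneg.mpr hs0.le)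
      _ = (2:ℝ) ^ (-u) * (s ^ (-u) * s ^ (-(2*v))) := by rw [h3]
      _ = (2*s) ^ (-u) * (s^2) ^ (-v) := by rw [h1, h2]; ring
  rw [if_pos hy₁abs, if_pos hz_abs]
  calc (2*s)⁻¹ ≤ (2*s) ^ (-u) * (s^2) ^ (-v) := hprod
    _ ≤ (max |x + Real.sin s| δ₁) ^ (-u) * (max |x - Real.cos s + 1| δ₂) ^ (-v) :=
        mul_le_mul hf₁low hf₂low (Real.rpow_nonneg (by positivity) _)
          (Real.rpow_nonneg hmax₁pos.le _)

set_option maxHeartbeats 2000000 in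
theorem not_strong_type_on_open_segment_BE (θ : ℝ) (hθ : θ ∈ Set.Ioo (0 : ℝ) 1)
    (p₁ p₂ : ℝ≥0∞)
    (hp₁ : 1 / p₁ = ENNReal.ofReal (θ / 3))
    (hp₂ : 1 / p₂ = ENNReal.ofReal (θ / 3 + (1 - θ) / 2)) :
    ¬ ∃ C : ℝ, 0 < C ∧ ∀ f₁ f₂ : ℝ → ℝ, Measurable f₁ → Measurable f₂ →
      (∀ x, 0 ≤ f₁ x) → (∀ x, 0 ≤ f₂ x) →
      lpNorm ∞ (T2 f₁ f₂) ≤ ENNReal.ofReal C *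
        lpNorm p₁ (fun x => ENNReal.ofReal (f₁ x)) *
        lpNorm p₂ (fun x => ENNReal.ofReal (f₂ x)) := by
  rintro ⟨C, hCpos, hbd⟩
  obtain ⟨hθ0, hθ1⟩ := hθ
  set u : ℝ := θ / 3 with hu_def
  set v : ℝ := θ / 3 + (1 - θ) / 2 with hv_def
  have hu0 : 0 < u := by rw [hu_def]; linarith
  have hu1 : u < 1 := by rw [hu_def]; linarith
  have hv0 : 0 < v := by rw [hv_def]; linarith
  have hv1 : v < 1 := by rw [hv_def]; linarith
  have huv : u + 2 * v = 1 := by rw [hu_def, hv_def]; ring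
  -- exponent facts
  have hp₁' : p₁ = (ENNReal.ofReal u)⁻¹ := by rw [← hp₁, one_div, inv_inv]
  have hp₂' : p₂ = (ENNReal.ofReal v)⁻¹ := by rw [← hp₂, one_div, inv_inv]
  have hp₁ne : p₁ ≠ ∞ := by
    rw [hp₁', Ne, ENNReal.inv_eq_top]
    simp only [ENNReal.ofReal_eq_zero, not_le]
    exact hu0
  have hp₂ne : p₂ ≠ ∞ := by
    rw [hp₂', Ne, ENNReal.inv_eq_top]
    simp only [ENNReal.ofReal_eq_zero, not_le]
    exact hv0
  have ht₁ : p₁.toReal = u⁻¹ := by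
    rw [hp₁', ENNReal.toReal_inv, ENNReal.toReal_ofReal hu0.le]
  have ht₂ : p₂.toReal = v⁻¹ := by
    rw [hp₂', ENNReal.toReal_inv, ENNReal.toReal_ofReal hv0.le]
  -- choose the scale parameter m
  obtain ⟨m, hm⟩ := exists_nat_ge (max 1 ((264 * Real.pi * C + 1) ^ v⁻¹))
  have hm1 : (1:ℝ) ≤ (m:ℝ) := le_trans (le_max_left _ _) hm
  have hmK : (264 * Real.pi * C + 1) ^ v⁻¹ ≤ (m:ℝ) := le_trans (le_max_right _ _) hm
  set N : ℕ := m + 3 with hN_def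
  set δ₁ : ℝ := (1/2 : ℝ) ^ N with hδ₁_def
  set δ₂ : ℝ := (1/4 : ℝ) ^ N with hδ₂_def
  have hδ₁pos : (0:ℝ) < δ₁ := by positivity
  have hδ₂pos : (0:ℝ) < δ₂ := by positivity
  have hδ₂₁ : δ₂ ≤ δ₁ := pow_le_pow_left₀ (by norm_num) (by norm_num) N
  have hδ₁sq : δ₁ ^ 2 = δ₂ := by
    rw [hδ₁_def, hδ₂_def, sq, ← mul_pow]; norm_num
  -- the counterexample functions
  set f₁ : ℝ → ℝ := fun y => if |y| ≤ 1/2 then (max |y| δ₁) ^ (-u) else 0 with hf₁_def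
  set f₂ : ℝ → ℝ := fun y => if |y + 1| ≤ 1/2 then (max |y + 1| δ₂) ^ (-v) else 0 with hf₂_def
  have hmax₁pos : ∀ y : ℝ, (0:ℝ) < max |y| δ₁ :=
    fun y => lt_of_lt_of_le hδ₁pos (le_max_right _ _)
  have hmax₂pos : ∀ y : ℝ, (0:ℝ) < max |y + 1| δ₂ :=
    fun y => lt_of_lt_of_le hδ₂pos (le_max_right _ _)
  have hmeas₁ : Measurable f₁ := by
    apply Measurable.ite (measurableSet_le (continuous_abs.measurable) measurable_const)
    · exact ((continuous_abs.max continuous_const).rpow_const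
        (fun y => Or.inl (hmax₁pos y).ne')).measurable
    · exact measurable_const
  have hmeas₂ : Measurable f₂ := by
    apply Measurable.ite
      (measurableSet_le ((continuous_abs.comp (continuous_id.add continuous_const)).measurable)
        measurable_const)
    · exact (((continuous_abs.comp (continuous_id.add continuous_const)).max
        continuous_const).rpow_const (fun y => Or.inl (hmax₂pos y).ne')).measurable
    · exact measurable_const
  have hnn₁ : ∀ y, 0 ≤ f₁ y := by
    intro y; rw [hf₁_def]
    dsimp only
    split
    · exact Real.rpow_nonneg (le_of_lt (hmax₁pos y)) _
    · exact le_refl 0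
  have hnn₂ : ∀ y, 0 ≤ f₂ y := by
    intro y; rw [hf₂_def]
    dsimp only
    split
    · exact Real.rpow_nonneg (le_of_lt (hmax₂pos y)) _
    · exact le_refl 0
  have H := hbd f₁ f₂ hmeas₁ hmeas₂ hnn₁ hnn₂
  -- upper bounds on the Lᵖ norms
  have hA0 : (0:ℝ) ≤ 1 + 8 * N := by positivity
  have hlp1 : lpNorm p₁ (fun x => ENNReal.ofReal (f₁ x)) ≤ ENNReal.ofReal ((1 + 8 * N) ^ u) := by
    rw [_root_.lpNorm, if_neg hp₁ne, ht₁, one_div, inv_inv]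
    have hpt : ∀ y : ℝ, (ENNReal.ofReal (f₁ y)) ^ u⁻¹
        = ENNReal.ofReal (if |y| ≤ 1/2 then (max |y| δ₁)⁻¹ else 0) := by
      intro y
      rw [hf₁_def]
      dsimp only
      by_cases hy : |y| ≤ 1/2
      · have hkey : ((max |y| δ₁) ^ (-u)) ^ u⁻¹ = (max |y| δ₁)⁻¹ := by
          rw [← Real.rpow_mul (hmax₁pos y).le, neg_mul, mul_inv_cancel₀ hu0.ne',
            Real.rpow_neg_one]
        rw [if_pos hy, if_pos hy,
          ENNReal.ofReal_rpow_of_nonneg (Real.rpow_nonneg (hmax₁pos y).le _) (by positivity),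
          hkey]
      · rw [if_neg hy, if_neg hy, ENNReal.ofReal_zero,
          ENNReal.zero_rpow_of_pos (by positivity)]
    have hint : ∫⁻ x, (ENNReal.ofReal (f₁ x)) ^ u⁻¹ ≤ ENNReal.ofReal (1 + 8 * N) := by
      calc ∫⁻ x, (ENNReal.ofReal (f₁ x)) ^ u⁻¹
          = ∫⁻ y, ENNReal.ofReal (if |y| ≤ 1/2 then (max |y| δ₁)⁻¹ else 0) :=
            lintegral_congr hpt
        _ ≤ ENNReal.ofReal (1 + 8 * N) := by
            rw [hδ₁_def]
            exact lint_step (1/2) (by norm_num) (by norm_num) N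
    calc (∫⁻ x, (ENNReal.ofReal (f₁ x)) ^ u⁻¹) ^ u
        ≤ (ENNReal.ofReal (1 + 8 * N)) ^ u := ENNReal.rpow_le_rpow hint hu0.le
      _ = ENNReal.ofReal ((1 + 8 * N) ^ u) := ENNReal.ofReal_rpow_of_nonneg hA0 hu0.le
  have hlp2 : lpNorm p₂ (fun x => ENNReal.ofReal (f₂ x)) ≤ ENNReal.ofReal ((1 + 8 * N) ^ v) := by
    rw [_root_.lpNorm, if_neg hp₂ne, ht₂, one_div, inv_inv]
    have hpt : ∀ y : ℝ, (ENNReal.ofReal (f₂ y)) ^ v⁻¹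
        = ENNReal.ofReal (if |y + 1| ≤ 1/2 then (max |y + 1| δ₂)⁻¹ else 0) := by
      intro y
      rw [hf₂_def]
      dsimp only
      by_cases hy : |y + 1| ≤ 1/2
      · have hkey : ((max |y + 1| δ₂) ^ (-v)) ^ v⁻¹ = (max |y + 1| δ₂)⁻¹ := by
          rw [← Real.rpow_mul (hmax₂pos y).le, neg_mul, mul_inv_cancel₀ hv0.ne',
            Real.rpow_neg_one]
        rw [if_pos hy, if_pos hy,
          ENNReal.ofReal_rpow_of_nonneg (Real.rpow_nonneg (hmax₂pos y).le _) (by positivity),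
          hkey]
      · rw [if_neg hy, if_neg hy, ENNReal.ofReal_zero,
          ENNReal.zero_rpow_of_pos (by positivity)]
    have hint : ∫⁻ x, (ENNReal.ofReal (f₂ x)) ^ v⁻¹ ≤ ENNReal.ofReal (1 + 8 * N) := by
      calc ∫⁻ x, (ENNReal.ofReal (f₂ x)) ^ v⁻¹
          = ∫⁻ y, ENNReal.ofReal (if |y + 1| ≤ 1/2 then (max |y + 1| δ₂)⁻¹ else 0) :=
            lintegral_congr hpt
        _ = ∫⁻ z, ENNReal.ofReal (if |z| ≤ 1/2 then (max |z| δ₂)⁻¹ else 0) :=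
            lintegral_add_right_eq_self
              (fun z => ENNReal.ofReal (if |z| ≤ 1/2 then (max |z| δ₂)⁻¹ else 0)) 1
        _ ≤ ENNReal.ofReal (1 + 8 * N) := by
            rw [hδ₂_def]
            exact lint_step (1/4) (by norm_num) (by norm_num) N
    calc (∫⁻ x, (ENNReal.ofReal (f₂ x)) ^ v⁻¹) ^ v
        ≤ (ENNReal.ofReal (1 + 8 * N)) ^ v := ENNReal.rpow_le_rpow hint hv0.le
      _ = ENNReal.ofReal ((1 + 8 * N) ^ v) := ENNReal.ofReal_rpow_of_nonneg hA0 hv0.le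
  -- lower bound on the L^∞ norm of T2
  have hπ : (3:ℝ) < Real.pi := Real.pi_gt_three
  have hT : ∀ x ∈ Set.Icc (-(δ₂/4)) (δ₂/4),
      ENNReal.ofReal (((m:ℝ)/4) / (2 * Real.pi)) ≤ T2 f₁ f₂ x := by
    intro x hx
    have hxabs : |x| ≤ δ₂ / 4 := abs_le.mpr ⟨hx.1, hx.2⟩
    set a : ℝ := (1/2:ℝ) ^ N with ha_def
    have ha0 : (0:ℝ) < a := by positivity
    have haδ₁ : a = δ₁ := by rw [ha_def, hδ₁_def]
    have ha8 : a ≤ 1/8 := by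
      rw [ha_def]
      calc ((1/2:ℝ)) ^ N ≤ (1/2:ℝ) ^ 3 :=
            pow_le_pow_of_le_one (by norm_num) (by norm_num) (by omega)
        _ = 1/8 := by norm_num
    -- the key pointwise bound
    have key : ∀ t ∈ Set.Ioc (Real.pi/2 + a) (Real.pi/2 + 1/8),
        ENNReal.ofReal ((2 * (t - Real.pi/2))⁻¹)
          ≤ ENNReal.ofReal (f₁ (x - Real.cos t)) * ENNReal.ofReal (f₂ (x - Real.sin t)) := by
      intro t ht
      have hs0 : 0 < t - Real.pi/2 := by have := ht.1; linarith
      have hs8 : t - Real.pi/2 ≤ 1/8 := by have := ht.2; linarith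
      have hsa : a < t - Real.pi/2 := by have := ht.1; linarith
      have hts : t = Real.pi/2 + (t - Real.pi/2) := by ring
      have hcos : Real.cos t = -Real.sin (t - Real.pi/2) := by
        rw [hts, Real.cos_add, Real.cos_pi_div_two, Real.sin_pi_div_two]; ring_nf
      have hsin : Real.sin t = Real.cos (t - Real.pi/2) := by
        rw [hts, Real.sin_add, Real.cos_pi_div_two, Real.sin_pi_div_two]; ring_nf
      have harg₁ : x - Real.cos t = x + Real.sin (t - Real.pi/2) := by rw [hcos]; ring
      have harg₂ : x - Real.sin t + 1 = x - Real.cos (t - Real.pi/2) + 1 := by rw [hsin]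
      have hkr := key_real u v δ₁ δ₂ a x (t - Real.pi/2) hu0 hv0 hu1 huv hδ₁pos hδ₂pos
        haδ₁ hδ₁sq hδ₂₁ ha8 hsa hs8 hxabs
      have hf₁eq : f₁ (x - Real.cos t)
          = (if |x + Real.sin (t - Real.pi/2)| ≤ 1/2
              then (max |x + Real.sin (t - Real.pi/2)| δ₁) ^ (-u) else 0) := by
        rw [hf₁_def, harg₁]
      have hf₂eq : f₂ (x - Real.sin t)
          = (if |x - Real.cos (t - Real.pi/2) + 1| ≤ 1/2
              then (max |x - Real.cos (t - Real.pi/2) + 1| δ₂) ^ (-v) else 0) := by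
        rw [hf₂_def]
        dsimp only
        rw [harg₂]
      rw [hf₁eq, hf₂eq]
      calc ENNReal.ofReal ((2 * (t - Real.pi/2))⁻¹)
          ≤ ENNReal.ofReal ((if |x + Real.sin (t - Real.pi/2)| ≤ 1/2
                then (max |x + Real.sin (t - Real.pi/2)| δ₁) ^ (-u) else 0)
              * (if |x - Real.cos (t - Real.pi/2) + 1| ≤ 1/2
                then (max |x - Real.cos (t - Real.pi/2) + 1| δ₂) ^ (-v) else 0)) :=
            ENNReal.ofReal_le_ofReal hkr
        _ ≤ _ := by
            rw [ENNReal.ofReal_mul]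
            split
            · exact Real.rpow_nonneg (le_trans hδ₁pos.le (le_max_right _ _)) _
            · exact le_refl 0
    -- assemble the integral lower bound
    have hsub : Set.Ioc (Real.pi/2 + a) (Real.pi/2 + 1/8) ⊆ Set.Ioc 0 (2 * Real.pi) := by
      intro t ht
      constructor
      · have := ht.1; nlinarith [Real.pi_pos]
      · have := ht.2; nlinarith
    have hI : ENNReal.ofReal ((m:ℝ)/4)
        ≤ ∫⁻ t in Set.Ioc 0 (2 * Real.pi),
            ENNReal.ofReal (f₁ (x - Real.cos t)) * ENNReal.ofReal (f₂ (x - Real.sin t)) := by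
      calc ENNReal.ofReal ((m:ℝ)/4)
          ≤ ∫⁻ s in Set.Ioc ((1/2:ℝ) ^ (m + 3)) (1/8), ENNReal.ofReal ((2 * s)⁻¹) :=
            lint_low m
        _ = ∫⁻ t in Set.Ioc (Real.pi/2 + (1/2:ℝ) ^ (m+3)) (Real.pi/2 + 1/8),
              ENNReal.ofReal ((2 * (t - Real.pi/2))⁻¹) :=
            (lint_shift (fun s => ENNReal.ofReal ((2 * s)⁻¹)) (Real.pi/2) _ _).symm
        _ = ∫⁻ t in Set.Ioc (Real.pi/2 + a) (Real.pi/2 + 1/8),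
              ENNReal.ofReal ((2 * (t - Real.pi/2))⁻¹) := by rw [← ha_def]
        _ ≤ ∫⁻ t in Set.Ioc (Real.pi/2 + a) (Real.pi/2 + 1/8),
              ENNReal.ofReal (f₁ (x - Real.cos t)) * ENNReal.ofReal (f₂ (x - Real.sin t)) :=
            setlint_mono_on measurableSet_Ioc key
        _ ≤ ∫⁻ t in Set.Ioc 0 (2 * Real.pi),
              ENNReal.ofReal (f₁ (x - Real.cos t)) * ENNReal.ofReal (f₂ (x - Real.sin t)) :=
            lintegral_mono_set hsub
    calc ENNReal.ofReal (((m:ℝ)/4) / (2 * Real.pi))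
        = ENNReal.ofReal ((m:ℝ)/4) / ENNReal.ofReal (2 * Real.pi) :=
          ENNReal.ofReal_div_of_pos Real.two_pi_pos
      _ = (ENNReal.ofReal (2 * Real.pi))⁻¹ * ENNReal.ofReal ((m:ℝ)/4) :=
          ENNReal.div_eq_inv_mul
      _ ≤ T2 f₁ f₂ x := by
          rw [T2]
          exact mul_le_mul_right hI _
  have hXne : volume (Set.Icc (-(δ₂/4)) (δ₂/4)) ≠ 0 := by
    rw [Real.volume_Icc]
    simp only [Ne, ENNReal.ofReal_eq_zero, not_le]
    linarith
  have hE : ENNReal.ofReal (((m:ℝ)/4) / (2 * Real.pi)) ≤ lpNorm ∞ (T2 f₁ f₂) := by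
    rw [_root_.lpNorm, if_pos rfl]
    exact le_essSup_vol hXne hT
  -- final contradiction
  have hfinal : ENNReal.ofReal (((m:ℝ)/4) / (2 * Real.pi))
      ≤ ENNReal.ofReal (C * ((1 + 8 * N) ^ u * (1 + 8 * N) ^ v)) := by
    refine le_trans hE (le_trans H ?_)
    calc ENNReal.ofReal C * lpNorm p₁ (fun x => ENNReal.ofReal (f₁ x))
          * lpNorm p₂ (fun x => ENNReal.ofReal (f₂ x))
        ≤ ENNReal.ofReal C * ENNReal.ofReal ((1 + 8 * N) ^ u)
            * ENNReal.ofReal ((1 + 8 * N) ^ v) :=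
          mul_le_mul' (mul_le_mul' le_rfl hlp1) hlp2
      _ = ENNReal.ofReal (C * ((1 + 8 * N) ^ u * (1 + 8 * N) ^ v)) := by
          rw [← ENNReal.ofReal_mul hCpos.le, ← ENNReal.ofReal_mul (by positivity)]
          ring_nf
  have hreal : ((m:ℝ)/4) / (2 * Real.pi) ≤ C * ((1 + 8 * N) ^ u * (1 + 8 * N) ^ v) :=
    (ENNReal.ofReal_le_ofReal_iff (by positivity)).mp hfinal
  -- arithmetic
  set w : ℝ := u + v with hw_def
  have hw1 : w + v = 1 := by rw [hw_def]; linarith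
  have hApos : (0:ℝ) < 1 + 8 * N := by positivity
  have hAuv : ((1:ℝ) + 8 * N) ^ u * (1 + 8 * N) ^ v = (1 + 8 * N) ^ w := by
    rw [hw_def]
    exact (Real.rpow_add hApos u v).symm
  have hA33 : (1:ℝ) + 8 * N ≤ 33 * m := by
    rw [hN_def]
    push_cast
    linarith
  have hmpos : (0:ℝ) < (m:ℝ) := by linarith
  have hw0 : 0 ≤ w := by rw [hw_def]; linarith
  have hwle1 : w ≤ 1 := by rw [hw_def]; linarith
  have h33 : ((1:ℝ) + 8 * N) ^ w ≤ 33 * (m:ℝ) ^ w := by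
    calc ((1:ℝ) + 8 * N) ^ w ≤ (33 * (m:ℝ)) ^ w :=
          Real.rpow_le_rpow hApos.le hA33 hw0
      _ = (33:ℝ) ^ w * (m:ℝ) ^ w := Real.mul_rpow (by norm_num) hmpos.le
      _ ≤ 33 * (m:ℝ) ^ w := by
          have h1 : (33:ℝ) ^ w ≤ (33:ℝ) ^ (1:ℝ) :=
            Real.rpow_le_rpow_of_exponent_le (by norm_num) hwle1
          rw [Real.rpow_one] at h1
          exact mul_le_mul_of_nonneg_right h1 (Real.rpow_nonneg hmpos.le _)
  have hmw_pos : (0:ℝ) < (m:ℝ) ^ w := Real.rpow_pos_of_pos hmpos _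
  have hmv_pos : (0:ℝ) < (m:ℝ) ^ v := Real.rpow_pos_of_pos hmpos _
  have hm_split : (m:ℝ) ^ w * (m:ℝ) ^ v = m := by
    rw [← Real.rpow_add hmpos, hw1, Real.rpow_one]
  have hmv : 264 * Real.pi * C + 1 ≤ (m:ℝ) ^ v := by
    have hKpos : (0:ℝ) < 264 * Real.pi * C + 1 := by positivity
    calc 264 * Real.pi * C + 1
        = ((264 * Real.pi * C + 1) ^ v⁻¹) ^ v := by
          rw [← Real.rpow_mul hKpos.le, inv_mul_cancel₀ hv0.ne', Real.rpow_one]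
      _ ≤ ((m:ℝ)) ^ v := Real.rpow_le_rpow (Real.rpow_nonneg hKpos.le _) hmK hv0.le
  -- from hreal: m ≤ 264 π C m^w
  have h5 : (m:ℝ) ≤ 264 * Real.pi * C * (m:ℝ) ^ w := by
    have h6 : ((m:ℝ)/4) / (2 * Real.pi) ≤ C * (33 * (m:ℝ) ^ w) := by
      rw [hAuv] at hreal
      refine le_trans hreal ?_
      exact mul_le_mul_of_nonneg_left h33 hCpos.le
    have hπpos : (0:ℝ) < 2 * Real.pi := Real.two_pi_pos
    rw [div_le_iff₀ hπpos] at h6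
    nlinarith
  have h7 : (264 * Real.pi * C + 1) * (m:ℝ) ^ w ≤ m := by
    calc (264 * Real.pi * C + 1) * (m:ℝ) ^ w
        ≤ (m:ℝ) ^ v * (m:ℝ) ^ w := mul_le_mul_of_nonneg_right hmv hmw_pos.le
      _ = m := by rw [mul_comm]; exact hm_split
  nlinarith
end
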